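/- arXiv:1603.08504 — 5 statements merged into one kernel-verified Lean document; each statement's English description precedes it below -/
import Mathlib

section
/- Let α > 0 and z > 0 be fixed real numbers. Then the function β ↦ 𝔼_{α,β}(z) = Γ(β)·E_{α,β}(z) is log-convex on (0,∞); that is, for all β₁, β₂ > 0 and t ∈ [0,1], 𝔼_{α, tβ₁+(1−t)β₂}(z) ≤ [𝔼_{α,β₁}(z)]^t · [𝔼_{α,β₂}(z)]^{1−t}. -/
open Real Filter Topology

private lemma combo_pos {β₁ β₂ t : ℝ} (hβ₁ : 0 < β₁) (hβ₂ : 0 < β₂)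
    (ht : 0 ≤ t) (ht1 : t ≤ 1) : 0 < t * β₁ + (1 - t) * β₂ := by
  rcases lt_or_eq_of_le ht with h | h
  · nlinarith [mul_nonneg (sub_nonneg.2 ht1) hβ₂.le]
  · nlinarith

private lemma frac_concave {β₁ β₂ t c d : ℝ} (hβ₁ : 0 < β₁) (hβ₂ : 0 < β₂)
    (ht : 0 ≤ t) (ht1 : t ≤ 1) (hd : 0 ≤ d) (hdc : d ≤ c) :
    t * ((β₁ + d) / (β₁ + c)) + (1 - t) * ((β₂ + d) / (β₂ + c)) ≤
      ((t * β₁ + (1 - t) * β₂) + d) / ((t * β₁ + (1 - t) * β₂) + c) := by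
  have hc : 0 ≤ c := hd.trans hdc
  have h1 : 0 < β₁ + c := by linarith
  have h2 : 0 < β₂ + c := by linarith
  have h3 : 0 < (t * β₁ + (1 - t) * β₂) + c := by have := combo_pos hβ₁ hβ₂ ht ht1; linarith
  rw [mul_div_assoc' t, mul_div_assoc' (1-t), div_add_div _ _ h1.ne' h2.ne',
    div_le_div_iff₀ (mul_pos h1 h2) h3]
  nlinarith [mul_nonneg (mul_nonneg (mul_nonneg ht (sub_nonneg.2 ht1)) (sub_nonneg.2 hdc)) (sq_nonneg (β₁ - β₂))]

private lemma frac_log_convex {β₁ β₂ t c d : ℝ} (hβ₁ : 0 < β₁) (hβ₂ : 0 < β₂)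
    (ht : 0 ≤ t) (ht1 : t ≤ 1) (hd : 0 ≤ d) (hdc : d ≤ c) :
    ((t * β₁ + (1 - t) * β₂) + c) / ((t * β₁ + (1 - t) * β₂) + d) ≤
      ((β₁ + c) / (β₁ + d)) ^ t * ((β₂ + c) / (β₂ + d)) ^ (1 - t) := by
  have hc : 0 ≤ c := hd.trans hdc
  have hb : 0 < t * β₁ + (1 - t) * β₂ := combo_pos hβ₁ hβ₂ ht ht1
  have h1d : 0 < β₁ + d := by linarith
  have h2d : 0 < β₂ + d := by linarith
  have h1c : 0 < β₁ + c := by linarith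
  have h2c : 0 < β₂ + c := by linarith
  have hbd : 0 < (t * β₁ + (1 - t) * β₂) + d := by linarith
  have hbc : 0 < (t * β₁ + (1 - t) * β₂) + c := by linarith
  set g₁ := (β₁ + d) / (β₁ + c) with hg₁
  set g₂ := (β₂ + d) / (β₂ + c) with hg₂
  have hg₁0 : 0 < g₁ := div_pos h1d h1c
  have hg₂0 : 0 < g₂ := div_pos h2d h2c
  have amgm : g₁ ^ t * g₂ ^ (1 - t) ≤ t * g₁ + (1 - t) * g₂ :=
    Real.geom_mean_le_arith_mean2_weighted ht (by linarith) hg₁0.le hg₂0.le (by ring)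
  have key : g₁ ^ t * g₂ ^ (1 - t) ≤
      ((t * β₁ + (1 - t) * β₂) + d) / ((t * β₁ + (1 - t) * β₂) + c) :=
    amgm.trans (frac_concave hβ₁ hβ₂ ht ht1 hd hdc)
  have hpow : 0 < g₁ ^ t * g₂ ^ (1 - t) :=
    mul_pos (rpow_pos_of_pos hg₁0 _) (rpow_pos_of_pos hg₂0 _)
  have := one_div_le_one_div_of_le hpow key
  rw [one_div_div] at this
  calc ((t * β₁ + (1 - t) * β₂) + c) / ((t * β₁ + (1 - t) * β₂) + d)
      ≤ 1 / (g₁ ^ t * g₂ ^ (1 - t)) := this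
    _ = ((β₁ + c) / (β₁ + d)) ^ t * ((β₂ + c) / (β₂ + d)) ^ (1 - t) := by
        rw [one_div, mul_inv, ← Real.inv_rpow hg₁0.le, ← Real.inv_rpow hg₂0.le,
          hg₁, hg₂, inv_div, inv_div]

private lemma gammaSeq_ratio {s : ℝ} (hs : 0 ≤ s) (x : ℝ) (hx : 0 < x) {n : ℕ} (hn : 1 ≤ n) :
    Real.GammaSeq x n / Real.GammaSeq (x + s) n =
      (n : ℝ) ^ (-s) * ∏ j ∈ Finset.range (n + 1), ((x + s + j) / (x + j)) := by
  have hn0 : (0 : ℝ) < n := by exact_mod_cast hn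
  have hfac : ((Nat.factorial n : ℝ)) ≠ 0 := by
    exact_mod_cast (Nat.factorial_pos n).ne'
  have hP : ∀ y : ℝ, 0 < y → (∏ j ∈ Finset.range (n + 1), (y + (j:ℝ))) ≠ 0 :=
    fun y hy => (Finset.prod_pos fun j _ => by positivity).ne'
  have hQ : (∏ j ∈ Finset.range (n + 1), (x + s + (j:ℝ)))
      = ∏ j ∈ Finset.range (n + 1), ((x + s) + (j:ℝ)) := rfl
  rw [Finset.prod_div_distrib, hQ, Real.GammaSeq, Real.GammaSeq,
    Real.rpow_add hn0, Real.rpow_neg hn0.le]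
  have h1 : (n:ℝ) ^ x ≠ 0 := (Real.rpow_pos_of_pos hn0 _).ne'
  have h2 : (n:ℝ) ^ s ≠ 0 := (Real.rpow_pos_of_pos hn0 _).ne'
  field_simp [hP x hx, hP (x+s) (by linarith)]

private lemma Gamma_ratio_log_convex {s β₁ β₂ t : ℝ} (hs : 0 ≤ s)
    (hβ₁ : 0 < β₁) (hβ₂ : 0 < β₂) (ht : 0 ≤ t) (ht1 : t ≤ 1) :
    Real.Gamma (t * β₁ + (1 - t) * β₂) / Real.Gamma ((t * β₁ + (1 - t) * β₂) + s) ≤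
      (Real.Gamma β₁ / Real.Gamma (β₁ + s)) ^ t *
        (Real.Gamma β₂ / Real.Gamma (β₂ + s)) ^ (1 - t) := by
  set β := t * β₁ + (1 - t) * β₂ with hβdef
  have hβ : 0 < β := combo_pos hβ₁ hβ₂ ht ht1
  -- the finite-product inequality
  have prodle : ∀ n : ℕ, (∏ j ∈ Finset.range (n + 1), ((β + s + j) / (β + j))) ≤
      (∏ j ∈ Finset.range (n + 1), ((β₁ + s + j) / (β₁ + j))) ^ t *
      (∏ j ∈ Finset.range (n + 1), ((β₂ + s + j) / (β₂ + j))) ^ (1 - t) := by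
    intro n
    have h1 : ∀ j ∈ Finset.range (n+1), (0:ℝ) ≤ (β₁ + s + j) / (β₁ + j) :=
      fun j _ => by positivity
    have h2 : ∀ j ∈ Finset.range (n+1), (0:ℝ) ≤ (β₂ + s + j) / (β₂ + j) :=
      fun j _ => by positivity
    rw [← Real.finset_prod_rpow _ _ h1 t, ← Real.finset_prod_rpow _ _ h2 (1-t),
      ← Finset.prod_mul_distrib]
    refine Finset.prod_le_prod (fun j _ => by positivity) (fun j _ => ?_)
    have hd : (0:ℝ) ≤ (j:ℝ) := j.cast_nonneg
    have hdc : (j:ℝ) ≤ s + j := by linarith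
    have := frac_log_convex hβ₁ hβ₂ ht ht1 hd hdc (c := s + (j:ℝ))
    calc (β + s + j) / (β + j) = (β + (s + j)) / (β + j) := by ring_nf
      _ ≤ ((β₁ + (s+j)) / (β₁ + j)) ^ t * ((β₂ + (s+j)) / (β₂ + j)) ^ (1-t) := this
      _ = ((β₁ + s + j) / (β₁ + j)) ^ t * ((β₂ + s + j) / (β₂ + j)) ^ (1-t) := by ring_nf
  -- upgrade to GammaSeq ratios, for n ≥ 1
  have seqle : ∀ n : ℕ, 1 ≤ n →
      Real.GammaSeq β n / Real.GammaSeq (β + s) n ≤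
        (Real.GammaSeq β₁ n / Real.GammaSeq (β₁ + s) n) ^ t *
        (Real.GammaSeq β₂ n / Real.GammaSeq (β₂ + s) n) ^ (1 - t) := by
    intro n hn
    have hn0 : (0:ℝ) < n := by exact_mod_cast hn
    have hC : (0:ℝ) < (n:ℝ) ^ (-s) := Real.rpow_pos_of_pos hn0 _
    rw [gammaSeq_ratio hs β hβ hn, gammaSeq_ratio hs β₁ hβ₁ hn, gammaSeq_ratio hs β₂ hβ₂ hn]
    have hP1 : (0:ℝ) ≤ ∏ j ∈ Finset.range (n + 1), ((β₁ + s + j) / (β₁ + j)) :=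
      Finset.prod_nonneg fun j _ => by positivity
    have hP2 : (0:ℝ) ≤ ∏ j ∈ Finset.range (n + 1), ((β₂ + s + j) / (β₂ + j)) :=
      Finset.prod_nonneg fun j _ => by positivity
    rw [Real.mul_rpow hC.le hP1, Real.mul_rpow hC.le hP2]
    have hCC : ((n:ℝ) ^ (-s)) ^ t * ((n:ℝ) ^ (-s)) ^ (1-t) = (n:ℝ) ^ (-s) := by
      rw [← Real.rpow_add hC]; norm_num
    calc (n:ℝ) ^ (-s) * ∏ j ∈ Finset.range (n + 1), ((β + s + j) / (β + j))
        ≤ (n:ℝ) ^ (-s) * ((∏ j ∈ Finset.range (n + 1), ((β₁ + s + j) / (β₁ + j))) ^ t *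
            (∏ j ∈ Finset.range (n + 1), ((β₂ + s + j) / (β₂ + j))) ^ (1-t)) :=
          mul_le_mul_of_nonneg_left (prodle n) hC.le
      _ = ((n:ℝ) ^ (-s)) ^ t * (∏ j ∈ Finset.range (n + 1), ((β₁ + s + j) / (β₁ + j))) ^ t *
            (((n:ℝ) ^ (-s)) ^ (1-t) * (∏ j ∈ Finset.range (n + 1), ((β₂ + s + j) / (β₂ + j))) ^ (1-t)) := by
          linear_combination ((∏ j ∈ Finset.range (n + 1), ((β₁ + s + j) / (β₁ + j))) ^ t *
            (∏ j ∈ Finset.range (n + 1), ((β₂ + s + j) / (β₂ + j))) ^ (1-t)) * hCC.symm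
  -- pass to the limit
  have lim1 : Tendsto (fun n => Real.GammaSeq β n / Real.GammaSeq (β + s) n) atTop
      (𝓝 (Real.Gamma β / Real.Gamma (β + s))) :=
    (Real.GammaSeq_tendsto_Gamma β).div (Real.GammaSeq_tendsto_Gamma (β + s))
      (Real.Gamma_pos_of_pos (by linarith)).ne'
  have lim2 : Tendsto (fun n => (Real.GammaSeq β₁ n / Real.GammaSeq (β₁ + s) n) ^ t *
      (Real.GammaSeq β₂ n / Real.GammaSeq (β₂ + s) n) ^ (1 - t)) atTop
      (𝓝 ((Real.Gamma β₁ / Real.Gamma (β₁ + s)) ^ t *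
        (Real.Gamma β₂ / Real.Gamma (β₂ + s)) ^ (1 - t))) := by
    refine Filter.Tendsto.mul ?_ ?_
    · exact (((Real.GammaSeq_tendsto_Gamma β₁).div (Real.GammaSeq_tendsto_Gamma (β₁ + s))
        (Real.Gamma_pos_of_pos (by linarith)).ne')).rpow_const (Or.inr ht)
    · exact (((Real.GammaSeq_tendsto_Gamma β₂).div (Real.GammaSeq_tendsto_Gamma (β₂ + s))
        (Real.Gamma_pos_of_pos (by linarith)).ne')).rpow_const (Or.inr (by linarith))
  exact le_of_tendsto_of_tendsto lim1 lim2 (Filter.eventually_atTop.2 ⟨1, seqle⟩)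

private lemma Gamma_ratio_lower {α : ℝ} (hα : 0 < α) {x : ℝ} (hx : 2 ≤ x) :
    Real.Gamma x * (x - 1) ^ α ≤ Real.Gamma (x + α) := by
  have hx1 : (0:ℝ) < x - 1 := by linarith
  have hx0 : (0:ℝ) < x := by linarith
  have hxα : (0:ℝ) < x + α := by linarith
  have slope := Real.convexOn_log_Gamma.slope_mono_adjacent
    (Set.mem_Ioi.2 hx1) (Set.mem_Ioi.2 hxα) (by linarith : x - 1 < x) (by linarith : x < x + α)
  simp only [Function.comp_apply] at slope
  have hGx : Real.Gamma x = (x - 1) * Real.Gamma (x - 1) := by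
    have := Real.Gamma_add_one hx1.ne'
    rw [sub_add_cancel] at this
    exact this
  have hlog : Real.log (Real.Gamma x) - Real.log (Real.Gamma (x - 1)) = Real.log (x - 1) := by
    rw [hGx, Real.log_mul hx1.ne' (Real.Gamma_pos_of_pos hx1).ne']
    ring
  rw [show x - (x - 1) = 1 by ring, show x + α - x = α by ring, div_one, hlog] at slope
  have h2 : α * Real.log (x - 1) + Real.log (Real.Gamma x) ≤ Real.log (Real.Gamma (x + α)) := by
    rw [le_div_iff₀ hα] at slope
    nlinarith
  have h4 := Real.exp_le_exp.2 h2
  rw [Real.exp_add, Real.exp_log (Real.Gamma_pos_of_pos hx0),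
    Real.exp_log (Real.Gamma_pos_of_pos hxα)] at h4
  have h3 : Real.Gamma x * (x - 1) ^ α = Real.exp (α * Real.log (x - 1)) * Real.Gamma x := by
    rw [Real.rpow_def_of_pos hx1, mul_comm (Real.log (x - 1)) α, mul_comm]
  rw [h3]; exact h4

private lemma summable_ml {α β z : ℝ} (hα : 0 < α) (hβ : 0 < β) (hz : 0 < z) :
    Summable (fun n : ℕ => z ^ n / Real.Gamma (α * n + β)) := by
  obtain ⟨N, hN⟩ := exists_nat_ge ((2 + (2 * z) ^ (1/α) - β) / α)
  refine summable_of_ratio_norm_eventually_le (r := 1/2) (by norm_num) ?_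
  refine Filter.eventually_atTop.2 ⟨N, fun n hn => ?_⟩
  set x := α * n + β with hxdef
  have hxN : (2 + (2*z) ^ (1/α) - β) / α * α ≤ α * n := by
    rw [div_mul_cancel₀ _ hα.ne']
    calc 2 + (2*z) ^ (1/α) - β ≤ α * N := by
          have := mul_le_mul_of_nonneg_right hN hα.le
          rwa [div_mul_cancel₀ _ hα.ne', mul_comm (N:ℝ) α] at this
      _ ≤ α * n := by
          have : (N:ℝ) ≤ n := by exact_mod_cast hn
          nlinarith
  rw [div_mul_cancel₀ _ hα.ne'] at hxN
  have hrp : (0:ℝ) ≤ (2*z) ^ (1/α) := Real.rpow_nonneg (by linarith) _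
  have hx2 : 2 ≤ x := by simp only [hxdef]; linarith
  have hx1r : (2*z) ^ (1/α) ≤ x - 1 := by simp only [hxdef]; linarith
  have hx1 : (0:ℝ) < x - 1 := by linarith
  have hkey : 2 * z ≤ (x - 1) ^ α := by
    calc 2 * z = ((2*z) ^ (1/α)) ^ α := by
          rw [← Real.rpow_mul (by linarith : (0:ℝ) ≤ 2*z), one_div,
            inv_mul_cancel₀ hα.ne', Real.rpow_one]
      _ ≤ (x - 1) ^ α := Real.rpow_le_rpow hrp hx1r hα.le
  have hΓx : 0 < Real.Gamma x := Real.Gamma_pos_of_pos (by linarith)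
  have hΓx' : 0 < Real.Gamma (x + α) := Real.Gamma_pos_of_pos (by linarith)
  have hrat : Real.Gamma x * (2 * z) ≤ Real.Gamma (x + α) :=
    le_trans (by nlinarith [hΓx, hkey]) (Gamma_ratio_lower hα hx2)
  have hform : α * (n + 1 : ℕ) + β = x + α := by push_cast [hxdef]; ring
  rw [hform]
  have hzn : (0:ℝ) < z ^ n := pow_pos hz n
  rw [Real.norm_eq_abs, Real.norm_eq_abs, abs_of_pos (by positivity), abs_of_pos (by positivity)]
  calc z ^ (n+1) / Real.Gamma (x + α) ≤ z ^ (n+1) / (Real.Gamma x * (2 * z)) := by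
        gcongr <;> first | positivity | exact hrat
    _ = 1/2 * (z ^ n / Real.Gamma x) := by
        rw [pow_succ]; field_simp; try ring

/-- The Mittag-Leffler function `E_{α,β}(z) = ∑_{n=0}^∞ z^n / Γ(α n + β)`. -/
noncomputable def mittagLeffler (α β z : ℝ) : ℝ :=
  ∑' n : ℕ, z ^ n / Real.Gamma (α * n + β)

/-- The normalized Mittag-Leffler function `𝔼_{α,β}(z) = Γ(β) E_{α,β}(z)`. -/
noncomputable def mittagLefflerNorm (α β z : ℝ) : ℝ :=
  Real.Gamma β * mittagLeffler α β z

/-- For fixed `α > 0` and `z > 0`, the function `β ↦ 𝔼_{α,β}(z)` is log-convex on `(0,∞)`. -/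
theorem mittagLefflerNorm_log_convex (α z : ℝ) (hα : 0 < α) (hz : 0 < z) :
    ∀ β₁ β₂ t : ℝ, 0 < β₁ → 0 < β₂ → 0 ≤ t → t ≤ 1 →
      mittagLefflerNorm α (t * β₁ + (1 - t) * β₂) z ≤
        (mittagLefflerNorm α β₁ z) ^ t * (mittagLefflerNorm α β₂ z) ^ (1 - t) := by
  intro β₁ β₂ t hβ₁ hβ₂ ht ht1
  rcases ht.eq_or_lt with h0 | ht'
  · rw [← h0]; norm_num
  rcases ht1.eq_or_lt with h1 | ht1'
  · rw [h1]; norm_num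
  set β := t * β₁ + (1 - t) * β₂ with hβdef
  have hβ : 0 < β := combo_pos hβ₁ hβ₂ ht ht1
  set a : ℕ → ℝ → ℝ := fun n b => z ^ n * (Real.Gamma b / Real.Gamma (α * n + b)) with ha
  have ha_pos : ∀ (n : ℕ) (b : ℝ), 0 < b → 0 < a n b := by
    intro n b hb
    have h1 : 0 < Real.Gamma b := Real.Gamma_pos_of_pos hb
    have h2 : 0 < Real.Gamma (α * n + b) := Real.Gamma_pos_of_pos (by positivity)
    positivity
  have hrepr : ∀ b : ℝ, 0 < b → mittagLefflerNorm α b z = ∑' n, a n b := by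
    intro b hb
    rw [mittagLefflerNorm, mittagLeffler, ← tsum_mul_left]
    exact tsum_congr fun n => by simp only [ha]; ring
  have hsum : ∀ b : ℝ, 0 < b → Summable (fun n => a n b) := by
    intro b hb
    refine ((summable_ml hα hb hz).mul_left (Real.Gamma b)).congr fun n => ?_
    simp only [ha]; ring
  have hterm : ∀ n : ℕ, a n β ≤ (a n β₁) ^ t * (a n β₂) ^ (1 - t) := by
    intro n
    have hs : (0:ℝ) ≤ α * n := by positivity
    have hzn : (0:ℝ) < z ^ n := pow_pos hz n
    have key := Gamma_ratio_log_convex hs hβ₁ hβ₂ ht ht1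
    have hR1 : (0:ℝ) ≤ Real.Gamma β₁ / Real.Gamma (β₁ + α * n) := by
      have := Real.Gamma_pos_of_pos hβ₁
      have := Real.Gamma_pos_of_pos (show (0:ℝ) < β₁ + α * n by positivity)
      positivity
    have hR2 : (0:ℝ) ≤ Real.Gamma β₂ / Real.Gamma (β₂ + α * n) := by
      have := Real.Gamma_pos_of_pos hβ₂
      have := Real.Gamma_pos_of_pos (show (0:ℝ) < β₂ + α * n by positivity)
      positivity
    have expand : (a n β₁) ^ t * (a n β₂) ^ (1 - t) =
        z ^ n * ((Real.Gamma β₁ / Real.Gamma (β₁ + α * n)) ^ t *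
          (Real.Gamma β₂ / Real.Gamma (β₂ + α * n)) ^ (1 - t)) := by
      simp only [ha]
      rw [add_comm (α * n) β₁, add_comm (α * n) β₂,
        Real.mul_rpow hzn.le hR1, Real.mul_rpow hzn.le hR2]
      have : (z ^ n) ^ t * (z ^ n) ^ (1 - t) = z ^ n := by
        rw [← Real.rpow_add hzn]; norm_num
      linear_combination ((Real.Gamma β₁ / Real.Gamma (β₁ + α * n)) ^ t *
        (Real.Gamma β₂ / Real.Gamma (β₂ + α * n)) ^ (1 - t)) * this
    rw [expand]
    simp only [ha, add_comm (α * (n:ℝ)) β]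
    exact mul_le_mul_of_nonneg_left key hzn.le
  -- Hölder
  have hpq : (1/t).HolderConjugate (1/(1-t)) := Real.holderConjugate_iff.mpr <| by
    constructor
    · exact one_lt_one_div ht' ht1'
    · simp only [one_div, inv_inv]; ring
  have hfp : ∀ n : ℕ, ((a n β₁) ^ t) ^ (1/t) = a n β₁ := fun n => by
    rw [← Real.rpow_mul (ha_pos n β₁ hβ₁).le, mul_one_div_cancel ht'.ne', Real.rpow_one]
  have hgq : ∀ n : ℕ, ((a n β₂) ^ (1 - t)) ^ (1/(1-t)) = a n β₂ := fun n => by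
    rw [← Real.rpow_mul (ha_pos n β₂ hβ₂).le,
      mul_one_div_cancel (by linarith : 1 - t ≠ 0), Real.rpow_one]
  have hf_sum : Summable fun n => ((a n β₁) ^ t) ^ (1/t) :=
    (hsum β₁ hβ₁).congr fun n => (hfp n).symm
  have hg_sum : Summable fun n => ((a n β₂) ^ (1 - t)) ^ (1/(1-t)) :=
    (hsum β₂ hβ₂).congr fun n => (hgq n).symm
  have H := Real.inner_le_Lp_mul_Lq_tsum_of_nonneg hpq
    (f := fun n => (a n β₁) ^ t) (g := fun n => (a n β₂) ^ (1 - t))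
    (fun n => Real.rpow_nonneg (ha_pos n β₁ hβ₁).le t)
    (fun n => Real.rpow_nonneg (ha_pos n β₂ hβ₂).le (1 - t)) hf_sum hg_sum
  rw [hrepr β hβ, hrepr β₁ hβ₁, hrepr β₂ hβ₂]
  calc ∑' n, a n β ≤ ∑' n, (a n β₁) ^ t * (a n β₂) ^ (1 - t) :=
        Summable.tsum_le_tsum hterm (hsum β hβ) (Real.summable_mul_of_Lp_Lq_of_nonneg hpq
          (f := fun n => (a n β₁) ^ t) (g := fun n => (a n β₂) ^ (1 - t))
          (fun n => Real.rpow_nonneg (ha_pos n β₁ hβ₁).le t)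
          (fun n => Real.rpow_nonneg (ha_pos n β₂ hβ₂).le (1 - t)) hf_sum hg_sum)
    _ ≤ (∑' n, ((a n β₁) ^ t) ^ (1/t)) ^ (1/(1/t)) *
        (∑' n, ((a n β₂) ^ (1 - t)) ^ (1/(1-t))) ^ (1/(1/(1-t))) := H
    _ = (∑' n, a n β₁) ^ t * (∑' n, a n β₂) ^ (1 - t) := by
        rw [one_div_one_div, one_div_one_div, tsum_congr hfp, tsum_congr hgq]
end

section
/- Let α > 0, β > 0 be real numbers and n ∈ ℕ. Then for all z > 0 the Turán type inequality E_{α, β+(n+1)α}(z) · E_{α, β+(n+3)α}(z) ≤ [E_{α, β+(n+2)α}(z)]² holds. -/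
set_option maxHeartbeats 1000000

open Finset

/-- Summability of the Mittag-Leffler series for positive parameters. -/
lemma ml_summable {α β z : ℝ} (hα : 0 < α) (hβ : 0 < β) (hz : 0 < z) :
    Summable (fun m : ℕ => z ^ m / Real.Gamma (α * m + β)) := by
  set R : ℝ := max 1 ((2 * z) ^ (α⁻¹)) with hRdef
  have hR1 : (1 : ℝ) ≤ R := le_max_left _ _
  have hR0 : (0 : ℝ) < R := lt_of_lt_of_le one_pos hR1
  have hRα : 2 * z ≤ R ^ α := by
    calc 2 * z = ((2 * z) ^ (α⁻¹)) ^ α := by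
          rw [← Real.rpow_mul (by positivity), inv_mul_cancel₀ hα.ne', Real.rpow_one]
      _ ≤ R ^ α := Real.rpow_le_rpow (by positivity) (le_max_right _ _) hα.le
  have hRαpos : 0 < R ^ α := Real.rpow_pos_of_pos hR0 α
  set C : ℝ := Real.exp R / R ^ (β - 2) with hCdef
  have key : ∀ m : ℕ, 2 ≤ α * m + β →
      z ^ m / Real.Gamma (α * m + β) ≤ C * (1 / 2) ^ m := by
    intro m hm
    set x : ℝ := α * m + β with hx
    have hx0 : 0 < x := lt_of_lt_of_le two_pos hm
    have hfl2 : 2 ≤ ⌊x⌋₊ := Nat.le_floor (by exact_mod_cast hm)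
    obtain ⟨k, hk⟩ : ∃ k, ⌊x⌋₊ = k + 1 := ⟨⌊x⌋₊ - 1, by omega⟩
    have hkx : (k : ℝ) + 1 ≤ x := by
      have h : ((⌊x⌋₊ : ℕ) : ℝ) ≤ x := Nat.floor_le hx0.le
      rw [hk] at h; push_cast at h; linarith
    have hΓ : ((Nat.factorial k) : ℝ) ≤ Real.Gamma x := by
      rw [← Real.Gamma_nat_eq_factorial]
      rcases eq_or_lt_of_le hkx with h | h
      · rw [show ((k : ℝ) + 1) = x from h]
      · exact (Real.Gamma_strictMonoOn_Ici (by exact_mod_cast by omega : (2:ℝ) ≤ (k:ℝ)+1)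
          hm h).le
    have hxk : x - 2 ≤ (k : ℝ) := by
      have := Nat.lt_floor_add_one x
      rw [hk] at this; push_cast at this; linarith
    have hpow : R ^ (x - 2) ≤ (R : ℝ) ^ (k : ℕ) := by
      rw [← Real.rpow_natCast]
      exact Real.rpow_le_rpow_of_exponent_le hR1 hxk
    have hfact : R ^ (x - 2) / Real.exp R ≤ ((Nat.factorial k) : ℝ) := by
      have hkf : (0:ℝ) < (Nat.factorial k : ℝ) := by exact_mod_cast Nat.factorial_pos k
      have h1 := Real.pow_div_factorial_le_exp (x := R) hR0.le k
      rw [div_le_iff₀ hkf] at h1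
      rw [div_le_iff₀ (Real.exp_pos R)]
      calc R ^ (x - 2) ≤ R ^ k := hpow
        _ ≤ Real.exp R * (Nat.factorial k) := h1
        _ = (Nat.factorial k : ℝ) * Real.exp R := mul_comm _ _
    have hD : 0 < R ^ (x - 2) / Real.exp R := by positivity
    have hRx : R ^ (x - 2) = (R ^ α) ^ m * R ^ ((β : ℝ) - 2) := by
      rw [← Real.rpow_natCast (R ^ α) m, ← Real.rpow_mul hR0.le, ← Real.rpow_add hR0]
      congr 1; push_cast; ring
    calc z ^ m / Real.Gamma x ≤ z ^ m / (R ^ (x - 2) / Real.exp R) := by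
          gcongr
          exact hfact.trans hΓ
      _ = C * (z / R ^ α) ^ m := by
          rw [hRx, hCdef, div_pow]
          have h1 : ((R ^ α) ^ m : ℝ) ≠ 0 := by positivity
          have h2 : (R ^ ((β:ℝ) - 2)) ≠ 0 := by positivity
          have h3 : Real.exp R ≠ 0 := (Real.exp_pos R).ne'
          field_simp
      _ ≤ C * (1 / 2) ^ m := by
          have hC0 : 0 ≤ C := by positivity
          have : z / R ^ α ≤ 1 / 2 := by
            rw [div_le_div_iff₀ hRαpos two_pos]; linarith
          exact mul_le_mul_of_nonneg_left (pow_le_pow_left₀ (by positivity) this m) hC0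
  set N : ℕ := ⌈(2 - β) / α⌉₊ with hN
  rw [← summable_nat_add_iff N]
  have hNx : ∀ j : ℕ, 2 ≤ α * ((j : ℝ) + N) + β := by
    intro j
    have h1 : (2 - β) / α ≤ (N : ℝ) := Nat.le_ceil _
    have h2 : 2 - β ≤ α * N := by
      rw [div_le_iff₀ hα] at h1; linarith
    nlinarith [j.cast_nonneg (α := ℝ)]
  refine Summable.of_nonneg_of_le (f := fun j => C * (1 / 2) ^ (j + N)) ?_ ?_ ?_
  · intro j
    have := Real.Gamma_pos_of_pos (show (0:ℝ) < α * (j + N) + β by positivity)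
    positivity
  · intro j
    have := key (j + N) (by push_cast; exact hNx j)
    simpa using this
  · exact (summable_nat_add_iff N).2 ((summable_geometric_of_lt_one (by norm_num)
      (by norm_num)).mul_left C)

/-- Cross inequality for Gamma coming from log-convexity. -/
lemma gamma_cross {a b δ : ℝ} (ha : 0 < a) (hab : a ≤ b) (hδ : 0 ≤ δ) :
    Real.Gamma (a + δ) * Real.Gamma b ≤ Real.Gamma a * Real.Gamma (b + δ) := by
  have hb : 0 < b := lt_of_lt_of_le ha hab
  rcases eq_or_lt_of_le hδ with rfl | hδ
  · rw [add_zero, add_zero, mul_comm]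
  have key : Real.log (Real.Gamma (a + δ)) - Real.log (Real.Gamma a) ≤
      Real.log (Real.Gamma (b + δ)) - Real.log (Real.Gamma b) := by
    rcases eq_or_lt_of_le hab with rfl | hab
    · exact le_refl _
    set f : ℝ → ℝ := Real.log ∘ Real.Gamma with hf
    have hcvx := Real.convexOn_log_Gamma
    have mem : ∀ {x : ℝ}, 0 < x → x ∈ Set.Ioi (0:ℝ) := fun hx => Set.mem_Ioi.mpr hx
    have h1 : (f (a + δ) - f a) / (a + δ - a) ≤ (f (b + δ) - f a) / (b + δ - a) :=
      hcvx.secant_mono (mem ha) (mem (by linarith)) (mem (by linarith))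
        (by intro h; apply hδ.ne'; linarith) (by intro h; linarith) (by linarith)
    have h2 : (f a - f (b + δ)) / (a - (b + δ)) ≤ (f b - f (b + δ)) / (b - (b + δ)) :=
      hcvx.secant_mono (mem (by linarith)) (mem ha) (mem hb)
        (by intro h; linarith) (by intro h; apply hδ.ne'; linarith) hab.le
    have e0 : a + δ - a = δ := by ring
    have e1 : (f (b + δ) - f a) / (b + δ - a) = (f a - f (b + δ)) / (a - (b + δ)) := by
      rw [← neg_div_neg_eq, neg_sub, neg_sub]
    have e2 : (f b - f (b + δ)) / (b - (b + δ)) = (f (b + δ) - f b) / δ := by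
      rw [show b - (b + δ) = -δ by ring, div_neg, ← neg_div, neg_sub]
    rw [e0, e1] at h1
    rw [e2] at h2
    have h3 : (f (a + δ) - f a) / δ ≤ (f (b + δ) - f b) / δ := h1.trans h2
    have h4 := mul_le_mul_of_nonneg_right h3 hδ.le
    rw [div_mul_cancel₀ _ hδ.ne', div_mul_cancel₀ _ hδ.ne'] at h4
    exact h4
  have p1 : 0 < Real.Gamma (a + δ) := Real.Gamma_pos_of_pos (by linarith)
  have p2 : 0 < Real.Gamma a := Real.Gamma_pos_of_pos ha
  have p3 : 0 < Real.Gamma (b + δ) := Real.Gamma_pos_of_pos (by linarith)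
  have p4 : 0 < Real.Gamma b := Real.Gamma_pos_of_pos hb
  rw [← Real.log_le_log_iff (by positivity) (by positivity),
    Real.log_mul p1.ne' p4.ne', Real.log_mul p2.ne' p3.ne']
  linarith



/-- Turán type inequality for shifted Mittag-Leffler functions. -/
theorem mittagLeffler_turan_shift (α β : ℝ) (hα : 0 < α) (hβ : 0 < β) (n : ℕ) :
    ∀ z : ℝ, 0 < z →
      mittagLeffler α (β + (n + 1) * α) z * mittagLeffler α (β + (n + 3) * α) z ≤
        (mittagLeffler α (β + (n + 2) * α) z) ^ 2 := by
  intro z hz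
  set c : ℕ → ℝ := fun m => z ^ m / Real.Gamma (α * m + β) with hc
  have hcsum : Summable c := ml_summable hα hβ hz
  have hcpos : ∀ m, 0 < c m := fun m => div_pos (pow_pos hz m)
    (Real.Gamma_pos_of_pos (by positivity))
  have shift : ∀ k : ℕ, (∑' m : ℕ, c (m + k)) = z ^ k * mittagLeffler α (β + k * α) z := by
    intro k
    have e : ∀ m : ℕ, c (m + k) = z ^ k * (z ^ m / Real.Gamma (α * m + (β + k * α))) := by
      intro m
      simp only [hc]
      rw [pow_add, mul_comm (z ^ m) (z ^ k), mul_div_assoc]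
      congr 2
      push_cast; ring
    rw [mittagLeffler]
    simp_rw [e]
    exact tsum_mul_left
  have core : ∀ p q : ℕ, p ≤ q → c p * c (q + 1) ≤ c (p + 1) * c q := by
    intro p q hpq
    have hg := gamma_cross (a := α * p + β) (b := α * q + β) (δ := α)
      (by positivity)
      (by
        have h : (p : ℝ) ≤ q := by exact_mod_cast hpq
        nlinarith)
      hα.le
    have g1 : 0 < Real.Gamma (α * p + β) := Real.Gamma_pos_of_pos (by positivity)
    have g2 : 0 < Real.Gamma (α * p + β + α) := Real.Gamma_pos_of_pos (by positivity)
    have g3 : 0 < Real.Gamma (α * q + β) := Real.Gamma_pos_of_pos (by positivity)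
    have g4 : 0 < Real.Gamma (α * q + β + α) := Real.Gamma_pos_of_pos (by positivity)
    have ep : α * ((p : ℝ) + 1) + β = α * p + β + α := by ring
    have eq' : α * ((q : ℝ) + 1) + β = α * q + β + α := by ring
    simp only [hc]
    push_cast
    rw [ep, eq']
    rw [div_mul_div_comm, div_mul_div_comm,
      div_le_div_iff₀ (by positivity) (by positivity)]
    have hfac : (0:ℝ) ≤ z ^ p * z ^ q * z := by positivity
    calc z ^ p * z ^ (q + 1) * (Real.Gamma (α * p + β + α) * Real.Gamma (α * q + β))
        = z ^ p * z ^ q * z * (Real.Gamma (α * p + β + α) * Real.Gamma (α * q + β)) := by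
          ring
      _ ≤ z ^ p * z ^ q * z * (Real.Gamma (α * p + β) * Real.Gamma (α * q + β + α)) :=
          mul_le_mul_of_nonneg_left hg hfac
      _ = z ^ (p + 1) * z ^ q * (Real.Gamma (α * p + β) * Real.Gamma (α * q + β + α)) := by
          ring
  have hnn : ∀ k : ℕ, Summable fun m => c (m + k) :=
    fun k => (summable_nat_add_iff k).2 hcsum
  have hnorm : ∀ k : ℕ, Summable fun m => ‖c (m + k)‖ :=
    fun k => (hnn k).congr fun m => (Real.norm_of_nonneg (hcpos _).le).symm
  set E1 := mittagLeffler α (β + (n + 1) * α) z with hE1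
  set E2 := mittagLeffler α (β + (n + 2) * α) z with hE2
  set E3 := mittagLeffler α (β + (n + 3) * α) z with hE3
  suffices h : (∑' m, c (m + (n + 1))) * (∑' m, c (m + (n + 3))) ≤
      (∑' m, c (m + (n + 2))) ^ 2 by
    rw [shift (n + 1), shift (n + 2), shift (n + 3)] at h
    push_cast at h
    rw [← hE1, ← hE2, ← hE3] at h
    have hzp : (0:ℝ) < z ^ (2 * n + 4) := pow_pos hz _
    refine le_of_mul_le_mul_left ?_ hzp
    calc z ^ (2 * n + 4) * (E1 * E3) = z ^ (n + 1) * E1 * (z ^ (n + 3) * E3) := by ring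
      _ ≤ (z ^ (n + 2) * E2) ^ 2 := h
      _ = z ^ (2 * n + 4) * E2 ^ 2 := by ring
  rw [sq, tsum_mul_tsum_eq_tsum_sum_range_of_summable_norm (hnorm (n + 1)) (hnorm (n + 3)),
    tsum_mul_tsum_eq_tsum_sum_range_of_summable_norm (hnorm (n + 2)) (hnorm (n + 2))]
  refine Summable.tsum_le_tsum ?_
    (summable_norm_sum_mul_range_of_summable_norm (hnorm (n + 1)) (hnorm (n + 3))).of_norm
    (summable_norm_sum_mul_range_of_summable_norm (hnorm (n + 2)) (hnorm (n + 2))).of_norm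
  intro N
  set F : ℕ → ℝ := fun j => c (j + (n + 1)) * c (N + 1 - j + (n + 2)) with hF
  have e1 : ∀ k ∈ Finset.range (N + 1),
      c (k + (n + 1)) * c (N - k + (n + 3)) = F k := by
    intro k hk
    have hkN : k ≤ N := by simpa [Nat.lt_succ_iff] using hk
    simp only [hF]
    have : N - k + (n + 3) = N + 1 - k + (n + 2) := by omega
    rw [this]
  have e2 : ∀ k ∈ Finset.range (N + 1),
      c (k + (n + 2)) * c (N - k + (n + 2)) = F (k + 1) := by
    intro k hk
    have hkN : k ≤ N := by simpa [Nat.lt_succ_iff] using hk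
    simp only [hF]
    have h1 : k + (n + 2) = k + 1 + (n + 1) := by omega
    have h2 : N - k + (n + 2) = N + 1 - (k + 1) + (n + 2) := by omega
    rw [h1, h2]
  rw [Finset.sum_congr rfl e1, Finset.sum_congr rfl e2]
  have hs1 : ∑ j ∈ Finset.range (N + 2), F j =
      (∑ j ∈ Finset.range (N + 1), F (j + 1)) + F 0 := Finset.sum_range_succ' F (N + 1)
  have hs2 : ∑ j ∈ Finset.range (N + 2), F j =
      (∑ j ∈ Finset.range (N + 1), F j) + F (N + 1) := Finset.sum_range_succ F (N + 1)
  have hF0 : F 0 ≤ F (N + 1) := by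
    simp only [hF]
    have i1 : 0 + (n + 1) = n + 1 := by omega
    have i2 : N + 1 - 0 + (n + 2) = N + n + 2 + 1 := by omega
    have i3 : N + 1 + (n + 1) = (N + n + 2) := by omega
    have i4 : N + 1 - (N + 1) + (n + 2) = n + 2 := by omega
    rw [i1, i2, i3, i4]
    have hcore := core (n + 1) (N + n + 2) (by omega)
    have e : n + 1 + 1 = n + 2 := by omega
    rw [e] at hcore
    nlinarith [hcore]
  linarith [hs1, hs2, hF0]
end

section
/- Let α > 0 and β₁, β₂ be real numbers with β₁ ≥ β₂ > 1. Then the Lazarević-type inequality [𝔼_{α,β₁}(z)]^{Γ(β₁−1)/Γ(β₁)} ≤ [𝔼_{α,β₂}(z)]^{Γ(β₂−1)/Γ(β₂)} holds for all real z ≥ 0, where the powers are real powers of the positive numbers 𝔼_{α,βᵢ}(z). -/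
open Real Set Filter

/-- Slope-shift inequality for `log ∘ Gamma` coming from log-convexity of `Γ`. -/
theorem logGamma_shift (a b s : ℝ) (ha : 0 < a) (hab : a ≤ b) (hs : 0 ≤ s) :
    Real.log (Real.Gamma (a + s)) - Real.log (Real.Gamma a) ≤
      Real.log (Real.Gamma (b + s)) - Real.log (Real.Gamma b) := by
  rcases eq_or_lt_of_le hs with rfl | hs
  · simp
  rcases eq_or_lt_of_le hab with rfl | hab
  · simp
  set f := Real.log ∘ Real.Gamma
  have hb : 0 < b := lt_trans ha hab
  have hconv := Real.convexOn_log_Gamma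
  have h1 : (f (a + s) - f a) / (a + s - a) ≤ (f (b + s) - f a) / (b + s - a) :=
    hconv.secant_mono (mem_Ioi.2 ha) (mem_Ioi.2 (by linarith)) (mem_Ioi.2 (by linarith))
      (by linarith) (by linarith) (by linarith)
  have h2 : (f a - f (b + s)) / (a - (b + s)) ≤ (f b - f (b + s)) / (b - (b + s)) :=
    hconv.secant_mono (mem_Ioi.2 (by linarith : (0:ℝ) < b + s)) (mem_Ioi.2 ha)
      (mem_Ioi.2 hb) (by linarith) (by linarith) (by linarith)
  have e1 : (f a - f (b + s)) / (a - (b + s)) = (f (b + s) - f a) / (b + s - a) := by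
    rw [← neg_div_neg_eq]; ring_nf
  have e2 : (f b - f (b + s)) / (b - (b + s)) = (f (b + s) - f b) / s := by
    rw [← neg_div_neg_eq]; ring_nf
  rw [e1, e2] at h2
  have h3 : (f (a + s) - f a) / s ≤ (f (b + s) - f b) / s := by
    have := h1.trans h2
    simpa using this
  have := (div_le_div_iff_of_pos_right hs).mp h3
  simpa [f] using this

/-- Growth of the Gamma function: `Γ(x+a) ≥ Γ(x)·(x-1)^a` for `x > 1`, `a > 0`. -/
theorem Gamma_growth {x a : ℝ} (hx : 1 < x) (ha : 0 < a) :
    Real.Gamma x * (x - 1) ^ a ≤ Real.Gamma (x + a) := by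
  have hx0 : (0:ℝ) < x := by linarith
  have hx1 : 0 < x - 1 := by linarith
  have h := Real.convexOn_log_Gamma.secant_mono (a := x) (x := x - 1) (y := x + a)
    (mem_Ioi.2 hx0) (mem_Ioi.2 hx1) (mem_Ioi.2 (by linarith)) (by linarith) (by linarith)
    (by linarith)
  set f := Real.log ∘ Real.Gamma
  have hG : Real.Gamma x = (x - 1) * Real.Gamma (x - 1) := by
    have := Real.Gamma_add_one (s := x - 1) (by linarith)
    simpa using this
  have hfx : f x - f (x - 1) = Real.log (x - 1) := by
    simp only [f, Function.comp_apply]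
    rw [hG, Real.log_mul (by positivity) (Real.Gamma_pos_of_pos hx1).ne']
    ring
  have e1 : (f (x - 1) - f x) / (x - 1 - x) = Real.log (x - 1) := by
    rw [show x - 1 - x = -1 by ring, div_neg, div_one, neg_sub, hfx]
  rw [e1] at h
  have ea : x + a - x = a := by ring
  rw [ea] at h
  have h2 : a * Real.log (x - 1) ≤ f (x + a) - f x := by
    calc a * Real.log (x - 1) ≤ a * ((f (x + a) - f x) / a) :=
          mul_le_mul_of_nonneg_left h ha.le
      _ = f (x + a) - f x := by field_simp
  have hGx := Real.Gamma_pos_of_pos hx0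
  have hGxa := Real.Gamma_pos_of_pos (show 0 < x + a by linarith)
  have hlog : Real.log (Real.Gamma x * (x - 1) ^ a) ≤ Real.log (Real.Gamma (x + a)) := by
    rw [Real.log_mul hGx.ne' (by positivity), Real.log_rpow hx1]
    simp only [f, Function.comp_apply] at h2
    linarith
  have hpos : (0:ℝ) < Real.Gamma x * (x - 1) ^ a := by positivity
  exact (Real.log_le_log_iff hpos hGxa).mp hlog

/-- Summability of the Mittag-Leffler series. -/
theorem summable_mlf {α β z : ℝ} (hα : 0 < α) (hβ : 1 < β) (hz : 0 ≤ z) :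
    Summable (fun n : ℕ => z ^ n / Real.Gamma (α * n + β)) := by
  apply summable_of_ratio_norm_eventually_le (r := 1/2) (by norm_num)
  have htend : Tendsto (fun n : ℕ => α * n) atTop atTop :=
    (tendsto_natCast_atTop_atTop).const_mul_atTop hα
  filter_upwards [htend.eventually_ge_atTop (max 1 ((2*z+1) ^ (1/α)))] with n hn
  set x := α * n + β with hxdef
  have hx1 : 1 < x := by
    have : 0 ≤ α * n := by positivity
    simp only [hxdef]; linarith
  have hxkey : 2 * z + 1 ≤ (x - 1) ^ α := by
    have h1 : (1:ℝ) ≤ x - 1 := by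
      have := le_trans (le_max_left _ _) hn; simp only [hxdef]; linarith
    have h2 : (2*z+1) ^ (1/α) ≤ x - 1 := by
      have := le_trans (le_max_right _ _) hn; simp only [hxdef]; linarith
    calc 2 * z + 1 = ((2*z+1) ^ (1/α)) ^ α := by
          rw [← Real.rpow_mul (by positivity), one_div, inv_mul_cancel₀ hα.ne',
            Real.rpow_one]
      _ ≤ (x - 1) ^ α := Real.rpow_le_rpow (by positivity) h2 hα.le
  have hGx := Real.Gamma_pos_of_pos (show (0:ℝ) < x by linarith)
  have hGxa := Real.Gamma_pos_of_pos (show (0:ℝ) < x + α by linarith)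
  have hxa : α * (n + 1 : ℕ) + β = x + α := by push_cast; simp only [hxdef]; ring
  have hgrow := Gamma_growth hx1 hα
  simp only [hxa, Real.norm_eq_abs,
    abs_of_nonneg (div_nonneg (pow_nonneg hz _) hGxa.le),
    abs_of_nonneg (div_nonneg (pow_nonneg hz _) hGx.le)]
  have hpow : (0:ℝ) < (x - 1) ^ α := Real.rpow_pos_of_pos (by linarith) α
  have key : z ^ (n + 1) / Real.Gamma (x + α) ≤ z ^ (n+1) / (Real.Gamma x * (x-1)^α) :=
    div_le_div_of_nonneg_left (by positivity) (by positivity) hgrow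
  refine key.trans ?_
  have hfrac : z / (x-1)^α ≤ 1/2 := by
    rw [div_le_iff₀ hpow]; linarith
  have e : z ^ (n+1) / (Real.Gamma x * (x-1)^α) = (z/(x-1)^α) * (z^n / Real.Gamma x) := by
    rw [pow_succ]; field_simp
  rw [e]
  exact mul_le_mul_of_nonneg_right hfrac (by positivity)

/-- Termwise comparison of normalized Mittag-Leffler coefficients. -/
theorem mlf_coeff_mono {β₁ β₂ s : ℝ} (hβ₂ : 0 < β₂) (hβ : β₂ ≤ β₁) (hs : 0 ≤ s) :
    Real.Gamma β₁ / Real.Gamma (s + β₁) ≤ Real.Gamma β₂ / Real.Gamma (s + β₂) := by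
  have hβ₁ : 0 < β₁ := lt_of_lt_of_le hβ₂ hβ
  have h := logGamma_shift β₂ β₁ s hβ₂ hβ hs
  have hG1 := Real.Gamma_pos_of_pos hβ₁
  have hG2 := Real.Gamma_pos_of_pos hβ₂
  have hG1s := Real.Gamma_pos_of_pos (show (0:ℝ) < β₁ + s by linarith)
  have hG2s := Real.Gamma_pos_of_pos (show (0:ℝ) < β₂ + s by linarith)
  have hlog : Real.log (Real.Gamma β₁ * Real.Gamma (β₂ + s)) ≤
      Real.log (Real.Gamma β₂ * Real.Gamma (β₁ + s)) := by
    rw [Real.log_mul hG1.ne' hG2s.ne', Real.log_mul hG2.ne' hG1s.ne']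
    linarith
  have hmul : Real.Gamma β₁ * Real.Gamma (β₂ + s) ≤ Real.Gamma β₂ * Real.Gamma (β₁ + s) :=
    (Real.log_le_log_iff (by positivity) (by positivity)).mp hlog
  rw [div_le_div_iff₀ (by rw [add_comm]; exact hG1s) (by rw [add_comm]; exact hG2s),
    add_comm s β₁, add_comm s β₂]
  linarith

/-- The normalized Mittag-Leffler function is at least `1` for `z ≥ 0`. -/
theorem one_le_mlfNorm {α β z : ℝ} (hα : 0 < α) (hβ : 1 < β) (hz : 0 ≤ z) :
    1 ≤ mittagLefflerNorm α β z := by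
  have hGβ := Real.Gamma_pos_of_pos (show (0:ℝ) < β by linarith)
  have hsum := summable_mlf hα hβ hz
  have h0 : (fun n : ℕ => z ^ n / Real.Gamma (α * n + β)) 0 ≤ mittagLeffler α β z :=
    Summable.le_tsum hsum 0 fun j _ => by
      have : (0:ℝ) < α * j + β := by positivity
      positivity
  simp only [pow_zero, Nat.cast_zero, mul_zero, zero_add] at h0
  have : Real.Gamma β * (1 / Real.Gamma β) ≤ Real.Gamma β * mittagLeffler α β z :=
    mul_le_mul_of_nonneg_left h0 hGβ.le
  rwa [mul_one_div, div_self hGβ.ne'] at this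

/-- The normalized Mittag-Leffler function is antitone in `β`. -/
theorem mlfNorm_anti {α β₁ β₂ z : ℝ} (hα : 0 < α) (hβ₂ : 1 < β₂) (hβ : β₂ ≤ β₁)
    (hz : 0 ≤ z) : mittagLefflerNorm α β₁ z ≤ mittagLefflerNorm α β₂ z := by
  have hβ₁ : 1 < β₁ := lt_of_lt_of_le hβ₂ hβ
  have hs₁ := summable_mlf hα hβ₁ hz
  have hs₂ := summable_mlf hα hβ₂ hz
  unfold mittagLefflerNorm mittagLeffler
  rw [← tsum_mul_left, ← tsum_mul_left]
  refine Summable.tsum_le_tsum (fun n => ?_) (hs₁.mul_left _) (hs₂.mul_left _)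
  have hs : (0:ℝ) ≤ α * n := by positivity
  have h := mlf_coeff_mono (show (0:ℝ) < β₂ by linarith) hβ (s := α * n) hs
  have e : ∀ β : ℝ, Real.Gamma β * (z ^ n / Real.Gamma (α * n + β)) =
      z ^ n * (Real.Gamma β / Real.Gamma (α * n + β)) := fun β => by ring
  rw [e, e]
  exact mul_le_mul_of_nonneg_left h (pow_nonneg hz n)

/-- Lazarević-type inequality for normalized Mittag-Leffler functions. -/
theorem mittagLefflerNorm_lazarevic (α β₁ β₂ : ℝ) (hα : 0 < α)
    (hβ₂ : 1 < β₂) (hβ : β₂ ≤ β₁) :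
    ∀ z : ℝ, 0 ≤ z →
      (mittagLefflerNorm α β₁ z) ^ (Real.Gamma (β₁ - 1) / Real.Gamma β₁) ≤
        (mittagLefflerNorm α β₂ z) ^ (Real.Gamma (β₂ - 1) / Real.Gamma β₂) := by
  intro z hz
  have hβ₁ : 1 < β₁ := lt_of_lt_of_le hβ₂ hβ
  have hexp : ∀ β : ℝ, 1 < β → Real.Gamma (β - 1) / Real.Gamma β = 1 / (β - 1) := by
    intro β h
    have h1 : (0:ℝ) < β - 1 := by linarith
    have hG := Real.Gamma_pos_of_pos h1
    rw [show β = (β - 1) + 1 by ring, Real.Gamma_add_one h1.ne']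
    rw [show (β - 1) + 1 - 1 = β - 1 by ring]
    rw [div_mul_eq_div_div_swap, div_self hG.ne']
  rw [hexp β₁ hβ₁, hexp β₂ hβ₂]
  have h1 : (1:ℝ) ≤ mittagLefflerNorm α β₁ z := one_le_mlfNorm hα hβ₁ hz
  have h2 : (1:ℝ) ≤ mittagLefflerNorm α β₂ z := one_le_mlfNorm hα hβ₂ hz
  have hmono : mittagLefflerNorm α β₁ z ≤ mittagLefflerNorm α β₂ z :=
    mlfNorm_anti hα hβ₂ hβ hz
  have hee : 1 / (β₁ - 1) ≤ 1 / (β₂ - 1) :=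
    one_div_le_one_div_of_le (by linarith) (by linarith)
  calc (mittagLefflerNorm α β₁ z) ^ (1 / (β₁ - 1))
      ≤ (mittagLefflerNorm α β₁ z) ^ (1 / (β₂ - 1)) :=
        Real.rpow_le_rpow_of_exponent_le h1 hee
    _ ≤ (mittagLefflerNorm α β₂ z) ^ (1 / (β₂ - 1)) :=
        Real.rpow_le_rpow (by linarith) hmono (div_nonneg zero_le_one (by linarith))
end

section
/- Let α > 0, 0 < γ ≤ 1 and β > 0 be real numbers such that the Gamma function Γ is monotone increasing on the interval [β+1, ∞) (equivalently, β + 1 is at least the abscissa x* ≈ 1.4616 of the minimum of Γ on (0,∞)). Then for all z ∈ [0,1) the Turán type inequality E^{γ,1}_{α,β}(z)·E^{γ,1}_{α,β+2}(z) ≥ [E^{γ,1}_{α,β+1}(z)]² − 1/(Γ(β+1)·Γ(β+2)·(1−z)²) holds. -/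
open Real Finset

private lemma gamma_poch_le {γ : ℝ} (hγ₀ : 0 < γ) (hγ₁ : γ ≤ 1) (n : ℕ) :
    Real.Gamma (γ + n) ≤ n.factorial * Real.Gamma γ := by
  induction n with
  | zero => simp
  | succ n ih =>
    have hpos : (0:ℝ) < γ + n := by positivity
    have key : (γ : ℝ) + ((n:ℕ)+1 : ℕ) = (γ + n) + 1 := by push_cast; ring
    rw [key, Real.Gamma_add_one hpos.ne']
    have h1 : γ + (n:ℝ) ≤ (n:ℝ) + 1 := by linarith
    have h2 : 0 < Real.Gamma (γ + n) := Real.Gamma_pos_of_pos hpos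
    calc (γ + n) * Real.Gamma (γ + n) ≤ ((n:ℝ)+1) * (n.factorial * Real.Gamma γ) := by
          apply mul_le_mul h1 ih h2.le (by positivity)
      _ = (n+1).factorial * Real.Gamma γ := by
          rw [Nat.factorial_succ]; push_cast; ring

private lemma core_ineq {β a b K P Q : ℝ} (hβ : 0 < β) (ha : β ≤ a) (hb : β ≤ b)
    (hK : 0 < K) (hP : K ≤ P) (hQ : K ≤ Q) :
    2 / (P * Q) ≤ (a / (b+1) + b / (a+1)) / (P * Q) + 2 / (K * ((β+1) * K)) := by
  have ha0 : 0 < a := lt_of_lt_of_le hβ ha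
  have hb0 : 0 < b := lt_of_lt_of_le hβ hb
  have hP0 : 0 < P := lt_of_lt_of_le hK hP
  have hQ0 : 0 < Q := lt_of_lt_of_le hK hQ
  have hS : 2 * β / (β+1) ≤ a / (b+1) + b / (a+1) := by
    rw [div_add_div _ _ (by positivity : (b:ℝ)+1 ≠ 0) (by positivity : (a:ℝ)+1 ≠ 0),
      div_le_div_iff₀ (by positivity) (by positivity)]
    nlinarith [sq_nonneg (a - b), mul_nonneg (sub_nonneg.2 ha) (sub_nonneg.2 hb)]
  set S := a / (b+1) + b / (a+1) with hSdef
  rcases le_or_gt 2 S with h | h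
  · have h1 : 2 / (P*Q) ≤ S / (P*Q) := by gcongr
    have h2 : (0:ℝ) < 2 / (K * ((β+1) * K)) := by positivity
    linarith
  · have hfrac : 2 - 2*β/(β+1) = 2/(β+1) := by field_simp; ring
    have h2 : (2 - S)/(P*Q) ≤ (2/(β+1))/(K*K) := by
      apply div_le_div₀ (by positivity) (by linarith) (by positivity)
      nlinarith [mul_le_mul hP hQ hK.le hP0.le]
    have h3 : (2/(β+1))/(K*K) = 2 / (K * ((β+1) * K)) := by
      rw [div_div]; ring_nf
    have h4 : 2 / (P*Q) = S/(P*Q) + (2 - S)/(P*Q) := by ring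
    rw [h3] at h2; linarith

/-- The generalized Mittag-Leffler function
`E^{γ,q}_{α,β}(z) = ∑_{n=0}^∞ (γ)_{qn} z^n / (n! Γ(α n + β))`,
where `(γ)_s = Γ(γ+s)/Γ(γ)` is the Pochhammer symbol. -/
noncomputable def genMittagLeffler (α β γ q z : ℝ) : ℝ :=
  ∑' n : ℕ, (Real.Gamma (γ + q * n) / Real.Gamma γ) * z ^ n /
    (n.factorial * Real.Gamma (α * n + β))

set_option maxHeartbeats 1000000 in
/-- Turán type inequality with a defect term for the generalized
Mittag-Leffler function with `q = 1`. -/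
theorem genMittagLeffler_turan_defect (α β γ : ℝ) (hα : 0 < α) (hβ : 0 < β)
    (hγ₀ : 0 < γ) (hγ₁ : γ ≤ 1)
    (hΓ : MonotoneOn Real.Gamma (Set.Ici (β + 1))) :
    ∀ z : ℝ, 0 ≤ z → z < 1 →
      genMittagLeffler α β γ 1 z * genMittagLeffler α (β + 2) γ 1 z ≥
        (genMittagLeffler α (β + 1) γ 1 z) ^ 2 -
          1 / (Real.Gamma (β + 1) * Real.Gamma (β + 2) * (1 - z) ^ 2) := by
  intro z hz0 hz1
  have habs : ‖z‖ < 1 := by rwa [Real.norm_eq_abs, abs_of_nonneg hz0]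
  have hz1' : (0:ℝ) < 1 - z := by linarith
  set K := Real.Gamma (β+1) with hKdef
  have hK : 0 < K := Real.Gamma_pos_of_pos (by linarith)
  set C := K * ((β+1) * K) with hCdef
  have hC : 0 < C := by positivity
  have hL : Real.Gamma (β+2) = (β+1) * K := by
    have h : (β:ℝ)+2 = (β+1)+1 := by ring
    rw [h, Real.Gamma_add_one (by positivity : (β:ℝ)+1 ≠ 0)]
  have hγΓ : 0 < Real.Gamma γ := Real.Gamma_pos_of_pos hγ₀
  -- the Pochhammer ratios
  set d : ℕ → ℝ := fun n => Real.Gamma (γ + n) / Real.Gamma γ with hd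
  have hd_pos : ∀ n, 0 < d n := fun n =>
    div_pos (Real.Gamma_pos_of_pos (by positivity)) hγΓ
  have hd_le : ∀ n, d n ≤ n.factorial := by
    intro n
    rw [hd]
    exact (div_le_iff₀ hγΓ).2 (gamma_poch_le hγ₀ hγ₁ n)
  -- positivity of Gamma arguments
  have hA : ∀ n : ℕ, (0:ℝ) < α * n + β := fun n => by positivity
  have hG0_pos : ∀ n : ℕ, 0 < Real.Gamma (α * n + β) := fun n => Real.Gamma_pos_of_pos (hA n)
  have hP_pos : ∀ n : ℕ, 0 < Real.Gamma (α * n + β + 1) := fun n =>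
    Real.Gamma_pos_of_pos (by positivity)
  have hPK : ∀ n : ℕ, K ≤ Real.Gamma (α * n + β + 1) := by
    intro n
    have hn : (0:ℝ) ≤ α * n := by positivity
    refine hΓ Set.self_mem_Ici ?_ (by linarith)
    simp only [Set.mem_Ici]; linarith
  have hQK : ∀ n : ℕ, K ≤ Real.Gamma (α * n + β + 2) := by
    intro n
    have hn : (0:ℝ) ≤ α * n := by positivity
    refine hΓ Set.self_mem_Ici ?_ (by linarith)
    simp only [Set.mem_Ici]; linarith
  have hG2 : ∀ n : ℕ, Real.Gamma (α * n + β + 2)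
      = (α * n + β + 1) * Real.Gamma (α * n + β + 1) := by
    intro n
    have h : α * (n:ℝ) + β + 2 = (α * n + β + 1) + 1 := by ring
    rw [h, Real.Gamma_add_one (by positivity : α * (n:ℝ) + β + 1 ≠ 0)]
  have hG0 : ∀ n : ℕ, Real.Gamma (α * n + β)
      = Real.Gamma (α * n + β + 1) / (α * n + β) := by
    intro n
    rw [eq_div_iff (hA n).ne', Real.Gamma_add_one (hA n).ne']
    ring
  -- the three coefficient sequences (with powers of z included)
  set u : ℕ → ℝ := fun n => d n * z ^ n / (n.factorial * Real.Gamma (α * n + β + 1)) with hu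
  set v : ℕ → ℝ := fun n => d n * z ^ n / (n.factorial * Real.Gamma (α * n + β)) with hv
  set w : ℕ → ℝ := fun n => d n * z ^ n / (n.factorial * Real.Gamma (α * n + β + 2)) with hw
  have hgu : genMittagLeffler α (β+1) γ 1 z = ∑' n, u n := by
    unfold genMittagLeffler
    refine tsum_congr fun n => ?_
    simp only [hu, hd]
    push_cast
    ring_nf
  have hgv : genMittagLeffler α β γ 1 z = ∑' n, v n := by
    unfold genMittagLeffler
    refine tsum_congr fun n => ?_
    simp only [hv, hd]
    push_cast
    ring_nf
  have hgw : genMittagLeffler α (β+2) γ 1 z = ∑' n, w n := by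
    unfold genMittagLeffler
    refine tsum_congr fun n => ?_
    simp only [hw, hd]
    push_cast
    ring_nf
  -- positivity and bounds
  have hfac : ∀ n : ℕ, (0:ℝ) < n.factorial := fun n => by positivity
  have hu_nonneg : ∀ n, 0 ≤ u n := fun n =>
    div_nonneg (mul_nonneg (hd_pos n).le (pow_nonneg hz0 n))
      (mul_nonneg (hfac n).le (hP_pos n).le)
  have hv_nonneg : ∀ n, 0 ≤ v n := fun n =>
    div_nonneg (mul_nonneg (hd_pos n).le (pow_nonneg hz0 n))
      (mul_nonneg (hfac n).le (hG0_pos n).le)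
  have hw_nonneg : ∀ n, 0 ≤ w n := fun n =>
    div_nonneg (mul_nonneg (hd_pos n).le (pow_nonneg hz0 n))
      (mul_nonneg (hfac n).le (Real.Gamma_pos_of_pos (by positivity : (0:ℝ) < α * n + β + 2)).le)
  have hu_le : ∀ n, u n ≤ z ^ n / K := by
    intro n
    rw [hu]
    calc d n * z ^ n / (n.factorial * Real.Gamma (α * n + β + 1))
        ≤ (n.factorial : ℝ) * z ^ n / (n.factorial * K) := by
          apply div_le_div₀ (by positivity)
            (mul_le_mul (hd_le n) le_rfl (pow_nonneg hz0 n) (hfac n).le)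
            (by positivity)
            (mul_le_mul le_rfl (hPK n) hK.le (hfac n).le)
      _ = z ^ n / K := by
          rw [mul_div_mul_left _ _ (hfac n).ne']
  have hw_le : ∀ n, w n ≤ z ^ n / K := by
    intro n
    rw [hw]
    calc d n * z ^ n / (n.factorial * Real.Gamma (α * n + β + 2))
        ≤ (n.factorial : ℝ) * z ^ n / (n.factorial * K) := by
          apply div_le_div₀ (by positivity)
            (mul_le_mul (hd_le n) le_rfl (pow_nonneg hz0 n) (hfac n).le)
            (by positivity)
            (mul_le_mul le_rfl (hQK n) hK.le (hfac n).le)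
      _ = z ^ n / K := by
          rw [mul_div_mul_left _ _ (hfac n).ne']
  have hv_le : ∀ n, v n ≤ (α * n + β) * z ^ n / K := by
    intro n
    have hveq : v n = d n * z ^ n * (α * n + β) / (n.factorial * Real.Gamma (α * n + β + 1)) := by
      simp only [hv]
      rw [hG0 n]
      field_simp
    rw [hveq]
    calc d n * z ^ n * (α * n + β) / (n.factorial * Real.Gamma (α * n + β + 1))
        ≤ (n.factorial : ℝ) * z ^ n * (α * n + β) / (n.factorial * K) := by
          apply div_le_div₀ (by positivity) ?_ (by positivity)
            (mul_le_mul le_rfl (hPK n) hK.le (hfac n).le)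
          apply mul_le_mul_of_nonneg_right ?_ (hA n).le
          exact mul_le_mul (hd_le n) le_rfl (pow_nonneg hz0 n) (hfac n).le
      _ = (α * n + β) * z ^ n / K := by
          rw [show (n.factorial : ℝ) * z ^ n * (α * n + β)
              = (n.factorial : ℝ) * ((α * n + β) * z ^ n) by ring,
            mul_div_mul_left _ _ (hfac n).ne']
  -- summability
  have hgeo : Summable (fun n : ℕ => z ^ n) := summable_geometric_of_lt_one hz0 hz1
  have hgeo1 : Summable (fun n : ℕ => (n:ℝ) * z ^ n) := by
    simpa using summable_pow_mul_geometric_of_norm_lt_one 1 habs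
  have Su : Summable u :=
    Summable.of_nonneg_of_le hu_nonneg hu_le (hgeo.div_const K)
  have Sw : Summable w :=
    Summable.of_nonneg_of_le hw_nonneg hw_le (hgeo.div_const K)
  have Sv : Summable v := by
    refine Summable.of_nonneg_of_le hv_nonneg hv_le ?_
    have h := ((hgeo1.mul_left α).add (hgeo.mul_left β)).div_const K
    refine h.congr fun n => ?_
    ring
  have Su' : Summable (fun n => ‖u n‖) := by
    simp only [Real.norm_eq_abs]
    exact summable_abs_iff.2 Su
  have Sv' : Summable (fun n => ‖v n‖) := by
    simp only [Real.norm_eq_abs]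
    exact summable_abs_iff.2 Sv
  have Sw' : Summable (fun n => ‖w n‖) := by
    simp only [Real.norm_eq_abs]
    exact summable_abs_iff.2 Sw
  -- Cauchy products
  have hprod1 : (∑' n, u n) * (∑' n, u n)
      = ∑' k, ∑ kl ∈ antidiagonal k, u kl.1 * u kl.2 :=
    tsum_mul_tsum_eq_tsum_sum_antidiagonal_of_summable_norm Su' Su'
  have hprod2 : (∑' n, v n) * (∑' n, w n)
      = ∑' k, ∑ kl ∈ antidiagonal k, v kl.1 * w kl.2 :=
    tsum_mul_tsum_eq_tsum_sum_antidiagonal_of_summable_norm Sv' Sw'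
  have SS1 : Summable (fun k => ∑ kl ∈ antidiagonal k, u kl.1 * u kl.2) :=
    (summable_norm_sum_mul_antidiagonal_of_summable_norm Su' Su').of_norm
  have SS2 : Summable (fun k => ∑ kl ∈ antidiagonal k, v kl.1 * w kl.2) :=
    (summable_norm_sum_mul_antidiagonal_of_summable_norm Sv' Sw').of_norm
  -- defect series
  set e : ℕ → ℝ := fun k => ((k:ℝ)+1) * z ^ k / C with he
  have Se : Summable e := by
    have h := ((hgeo1.add hgeo).div_const C)
    refine h.congr fun n => ?_
    simp only [he]
    ring
  have htsum_e : ∑' k, e k = 1 / (C * (1-z)^2) := by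
    have e1 : ∑' k : ℕ, (k:ℝ) * z ^ k = z / (1-z)^2 :=
      tsum_coe_mul_geometric_of_norm_lt_one habs
    have e2 : ∑' k : ℕ, z ^ k = (1-z)⁻¹ := tsum_geometric_of_lt_one hz0 hz1
    have heq : e = fun k : ℕ => (k:ℝ) * z ^ k / C + z ^ k / C := by
      funext k
      simp only [he]
      ring
    rw [heq, Summable.tsum_add (hgeo1.div_const C) (hgeo.div_const C),
      tsum_div_const, tsum_div_const, e1, e2]
    field_simp
    ring
  -- the key pairwise inequality
  have hpair : ∀ i j : ℕ, 2 * (u i * u j) ≤ v i * w j + v j * w i + 2 * z ^ (i+j) / C := by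
    intro i j
    set a := α * i + β with hadef
    set b := α * j + β with hbdef
    set P := Real.Gamma (α * i + β + 1) with hPdef
    set Q := Real.Gamma (α * j + β + 1) with hQdef
    have ha : β ≤ a := by
      have : (0:ℝ) ≤ α * i := by positivity
      linarith
    have hb : β ≤ b := by
      have : (0:ℝ) ≤ α * j := by positivity
      linarith
    have ha0 : 0 < a := lt_of_lt_of_le hβ ha
    have hb0 : 0 < b := lt_of_lt_of_le hβ hb
    have hP : K ≤ P := hPK i
    have hQ : K ≤ Q := hPK j
    have hP0 : 0 < P := lt_of_lt_of_le hK hP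
    have hQ0 : 0 < Q := lt_of_lt_of_le hK hQ
    set D := d i * d j * z ^ (i+j) / (i.factorial * j.factorial) with hDdef
    have hD0 : 0 ≤ D := by
      apply div_nonneg _ (by positivity)
      exact mul_nonneg (mul_nonneg (hd_pos i).le (hd_pos j).le) (pow_nonneg hz0 _)
    have hD1 : D ≤ z ^ (i+j) := by
      rw [hDdef, div_le_iff₀ (by positivity)]
      have h1 : d i * d j ≤ (i.factorial : ℝ) * j.factorial :=
        mul_le_mul (hd_le i) (hd_le j) (hd_pos j).le (by positivity)
      exact (mul_le_mul_of_nonneg_right h1 (pow_nonneg hz0 (i+j))).trans_eq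
        (mul_comm _ _)
    have eq1 : u i * u j = D / (P * Q) := by
      simp only [hu, hDdef, ← hPdef, ← hQdef]
      rw [pow_add]
      field_simp
    have eq2 : v i * w j = a / (b+1) * (D / (P * Q)) := by
      simp only [hv, hw, hDdef]
      rw [hG0 i, hG2 j, ← hadef, ← hbdef, ← hPdef, ← hQdef, pow_add]
      field_simp
    have eq3 : v j * w i = b / (a+1) * (D / (P * Q)) := by
      simp only [hv, hw, hDdef]
      rw [hG0 j, hG2 i, ← hadef, ← hbdef, ← hPdef, ← hQdef, pow_add]
      field_simp
    have core := core_ineq hβ ha hb hK hP hQ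
    have t1 : D * (2 / (P*Q)) ≤ D * ((a / (b+1) + b / (a+1)) / (P * Q) + 2 / (K * ((β+1) * K))) :=
      mul_le_mul_of_nonneg_left core hD0
    have t2 : D * (2 / C) ≤ z ^ (i+j) * (2 / C) :=
      mul_le_mul_of_nonneg_right hD1 (by positivity)
    rw [eq1, eq2, eq3]
    have expand : D * ((a / (b+1) + b / (a+1)) / (P * Q) + 2 / (K * ((β+1) * K)))
        = a / (b+1) * (D / (P*Q)) + b / (a+1) * (D / (P*Q)) + D * (2 / C) := by
      rw [hCdef]; ring
    rw [expand] at t1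
    have hfin : z ^ (i+j) * (2 / C) = 2 * z ^ (i+j) / C := by ring
    calc 2 * (D / (P * Q)) = D * (2 / (P*Q)) := by ring
      _ ≤ a / (b+1) * (D / (P*Q)) + b / (a+1) * (D / (P*Q)) + D * (2 / C) := t1
      _ ≤ a / (b+1) * (D / (P*Q)) + b / (a+1) * (D / (P*Q)) + 2 * z ^ (i+j) / C := by
          rw [← hfin]; linarith
  -- per-power-of-z inequality
  have key : ∀ k : ℕ, (∑ kl ∈ antidiagonal k, u kl.1 * u kl.2)
      ≤ (∑ kl ∈ antidiagonal k, v kl.1 * w kl.2) + e k := by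
    intro k
    simp only [Finset.Nat.sum_antidiagonal_eq_sum_range_succ_mk]
    have hswap : ∑ i ∈ range (k+1), v (k-i) * w i = ∑ i ∈ range (k+1), v i * w (k-i) := by
      have hrefl := Finset.sum_range_reflect (fun j => v j * w (k - j)) (k+1)
      simp only [Nat.add_sub_cancel] at hrefl
      rw [← hrefl]
      refine Finset.sum_congr rfl fun i hi => ?_
      have hik : i ≤ k := Nat.lt_succ_iff.mp (Finset.mem_range.mp hi)
      rw [Nat.sub_sub_self hik]
    have main : ∑ i ∈ range (k+1), (2 * (u i * u (k-i)))
        ≤ ∑ i ∈ range (k+1), (v i * w (k-i) + v (k-i) * w i + 2 * z ^ k / C) := by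
      refine Finset.sum_le_sum fun i hi => ?_
      have hik : i ≤ k := Nat.lt_succ_iff.mp (Finset.mem_range.mp hi)
      have h := hpair i (k-i)
      rwa [Nat.add_sub_cancel' hik] at h
    rw [Finset.sum_add_distrib, Finset.sum_add_distrib, Finset.sum_const, card_range,
      hswap, ← Finset.mul_sum] at main
    have hcount : (k+1) • (2 * z ^ k / C) = 2 * e k := by
      simp only [nsmul_eq_mul, he]
      push_cast
      ring
    rw [hcount] at main
    linarith
  -- assemble everything
  rw [ge_iff_le, sub_le_iff_le_add, hgu, hgv, hgw, pow_two, hprod1, hprod2, hL, ← hCdef,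
    ← htsum_e]
  calc (∑' k, ∑ kl ∈ antidiagonal k, u kl.1 * u kl.2)
      ≤ ∑' k, ((∑ kl ∈ antidiagonal k, v kl.1 * w kl.2) + e k) :=
        Summable.tsum_le_tsum key SS1 (SS2.add Se)
    _ = (∑' k, ∑ kl ∈ antidiagonal k, v kl.1 * w kl.2) + ∑' k, e k := Summable.tsum_add SS2 Se
end

section
/- Let α > 0, β > 0, γ > 0 be real numbers and n ∈ ℕ. Then the Turán type inequality ((n+1)(γ+n+2))/((n+2)(γ+n+1)) · [Γ(β+α(n+2))]² / (Γ(β+α(n+1))·Γ(β+α(n+3))) · [E^{γ,1,n+1}_{α,β}(z)]² ≤ E^{γ,1,n}_{α,β}(z) · E^{γ,1,n+2}_{α,β}(z) holds for all z > 0. -/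
/-- The `n`-th remainder of the generalized Mittag-Leffler series with `q = 1`:
`E^{γ,1,n}_{α,β}(z) = ∑_{k=n+1}^∞ (γ)_k z^k / (k! Γ(α k + β))`. -/
noncomputable def genMittagLefflerRem (α β γ : ℝ) (n : ℕ) (z : ℝ) : ℝ :=
  ∑' k : ℕ, (Real.Gamma (γ + (n + 1 + k)) / Real.Gamma γ) * z ^ (n + 1 + k) /
    ((n + 1 + k).factorial * Real.Gamma (α * (n + 1 + k) + β))

open Filter Finset


lemma third_diff_factor (u h : ℝ) (hu : 0 < u) (hh : 0 ≤ h) :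
    (u + 2*h)^3 * u ≤ (u + 3*h) * (u + h)^3 := by
  nlinarith [mul_nonneg (mul_nonneg hh hh) hh, mul_nonneg (mul_nonneg (mul_nonneg hh hh) hh) hh,
    mul_nonneg (mul_nonneg (mul_nonneg hh hh) hh) hu.le]

lemma gamma_third_diff (x h : ℝ) (hx : 0 < x) (hh : 0 ≤ h) :
    Real.Gamma (x + 3*h) * Real.Gamma (x + h)^3 ≤ Real.Gamma (x + 2*h)^3 * Real.Gamma x := by
  refine le_of_tendsto_of_tendsto
    ((Real.GammaSeq_tendsto_Gamma (x+3*h)).mul ((Real.GammaSeq_tendsto_Gamma (x+h)).pow 3))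
    (((Real.GammaSeq_tendsto_Gamma (x+2*h)).pow 3).mul (Real.GammaSeq_tendsto_Gamma x)) ?_
  filter_upwards [eventually_ge_atTop 1] with m hm
  have hmpos : (0:ℝ) < (m:ℝ) := by exact_mod_cast hm
  have hP : ∀ t : ℝ, 0 < t → 0 < ∏ j ∈ range (m+1), (t + (j:ℝ)) := by
    intro t ht
    exact Finset.prod_pos fun j _ => by positivity
  simp only [Real.GammaSeq]
  have hnum : (m:ℝ)^(x+3*h) * ((m:ℝ)^(x+h))^3 = ((m:ℝ)^(x+2*h))^3 * (m:ℝ)^x := by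
    rw [← Real.rpow_natCast ((m:ℝ)^(x+h)) 3, ← Real.rpow_natCast ((m:ℝ)^(x+2*h)) 3,
      ← Real.rpow_mul hmpos.le, ← Real.rpow_mul hmpos.le, ← Real.rpow_add hmpos,
      ← Real.rpow_add hmpos]
    norm_num
    ring_nf
  have hprod : (∏ j ∈ range (m+1), (x + 2*h + (j:ℝ)))^3 * (∏ j ∈ range (m+1), (x + (j:ℝ)))
      ≤ (∏ j ∈ range (m+1), (x + 3*h + (j:ℝ))) * (∏ j ∈ range (m+1), (x + h + (j:ℝ)))^3 := by
    rw [← Finset.prod_pow, ← Finset.prod_mul_distrib, ← Finset.prod_pow, ← Finset.prod_mul_distrib]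
    refine Finset.prod_le_prod (fun j _ => by positivity) (fun j _ => ?_)
    have := third_diff_factor (x + (j:ℝ)) h (by positivity) hh
    calc (x + 2*h + (j:ℝ))^3 * (x + (j:ℝ)) = (x + (j:ℝ) + 2*h)^3 * (x + (j:ℝ)) := by ring
    _ ≤ (x + (j:ℝ) + 3*h) * (x + (j:ℝ) + h)^3 := this
    _ = (x + 3*h + (j:ℝ)) * (x + h + (j:ℝ))^3 := by ring
  have hN : ((m:ℝ) ^ (x + 3*h) * m.factorial) * ((m:ℝ) ^ (x+h) * m.factorial)^3
      = ((m:ℝ) ^ (x+2*h) * m.factorial)^3 * ((m:ℝ) ^ x * m.factorial) := by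
    linear_combination ((m.factorial:ℝ))^4 * hnum
  rw [div_pow, div_pow, div_mul_div_comm, div_mul_div_comm, hN]
  exact div_le_div_of_nonneg_left (by positivity) (by positivity) hprod

lemma G_step (α : ℝ) (x : ℝ) (hx : 0 < x) (hα : 0 < α) :
    Real.Gamma (x+α)^2 / (Real.Gamma x * Real.Gamma (x+2*α)) ≤
      Real.Gamma (x+2*α)^2 / (Real.Gamma (x+α) * Real.Gamma (x+3*α)) := by
  have g0 := Real.Gamma_pos_of_pos hx
  have g1 := Real.Gamma_pos_of_pos (show (0:ℝ) < x + α by linarith)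
  have g2 := Real.Gamma_pos_of_pos (show (0:ℝ) < x + 2*α by linarith)
  have g3 := Real.Gamma_pos_of_pos (show (0:ℝ) < x + 3*α by linarith)
  rw [div_le_div_iff₀ (by positivity) (by positivity)]
  nlinarith [gamma_third_diff x α hx hα.le]

/-- `Gq m` is `Γ(α(m+1)+β)² / (Γ(αm+β) Γ(α(m+2)+β))`. -/
noncomputable def Gq (α β : ℝ) (m : ℕ) : ℝ :=
  Real.Gamma (α*(m+1)+β)^2 / (Real.Gamma (α*m+β) * Real.Gamma (α*(m+2)+β))

lemma Gq_pos {α β : ℝ} (hα : 0 < α) (hβ : 0 < β) (m : ℕ) : 0 < Gq α β m := by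
  unfold Gq
  have g0 := Real.Gamma_pos_of_pos (show (0:ℝ) < α*m+β by positivity)
  have g1 := Real.Gamma_pos_of_pos (show (0:ℝ) < α*((m:ℝ)+1)+β by positivity)
  have g2 := Real.Gamma_pos_of_pos (show (0:ℝ) < α*((m:ℝ)+2)+β by positivity)
  positivity

lemma Gq_mono {α β : ℝ} (hα : 0 < α) (hβ : 0 < β) : Monotone (Gq α β) := by
  refine monotone_nat_of_le_succ fun m => ?_
  have h := G_step α (α*m+β) (by positivity) hα
  have e1 : (α*(m:ℝ)+β)+α = α*((m:ℝ)+1)+β := by ring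
  have e2 : (α*(m:ℝ)+β)+2*α = α*((m:ℝ)+2)+β := by ring
  have e3 : (α*(m:ℝ)+β)+3*α = α*((m:ℝ)+3)+β := by ring
  rw [e1, e2, e3] at h
  unfold Gq
  push_cast
  convert h using 4
  · rfl
  · ring
  · ring

lemma gamma_ratio_lb {α : ℝ} (hα : 0 < α) (x : ℝ) (hx : 1 < x) :
    Real.Gamma x * (x-1)^α ≤ Real.Gamma (x+α) := by
  have hx0 : (0:ℝ) < x := by linarith
  have hx1 : (0:ℝ) < x - 1 := by linarith
  have hslope := Real.convexOn_log_Gamma.slope_mono_adjacent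
    (Set.mem_Ioi.2 hx1) (Set.mem_Ioi.2 (show (0:ℝ) < x + α by linarith))
    (show x - 1 < x by linarith) (show x < x + α by linarith)
  simp only [Function.comp_apply] at hslope
  have hrec : Real.Gamma x = (x-1) * Real.Gamma (x-1) := by
    have := Real.Gamma_add_one (ne_of_gt hx1)
    rw [show x - 1 + 1 = x by ring] at this
    exact this
  have hlog : Real.log (Real.Gamma x) - Real.log (Real.Gamma (x-1)) = Real.log (x-1) := by
    rw [hrec, Real.log_mul (ne_of_gt hx1) (ne_of_gt (Real.Gamma_pos_of_pos hx1))]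
    ring
  rw [show x - (x-1) = 1 by ring, div_one, hlog] at hslope
  have h2 : α * Real.log (x-1) + Real.log (Real.Gamma x) ≤ Real.log (Real.Gamma (x+α)) := by
    rw [show x + α - x = α by ring, le_div_iff₀ hα] at hslope
    linarith
  have h3 := Real.exp_le_exp.2 h2
  rw [Real.exp_add, Real.exp_log (Real.Gamma_pos_of_pos hx0),
    Real.exp_log (Real.Gamma_pos_of_pos (show (0:ℝ) < x + α by linarith))] at h3
  rw [Real.rpow_def_of_pos hx1]
  calc Real.Gamma x * Real.exp (Real.log (x-1) * α)
      = Real.exp (α * Real.log (x-1)) * Real.Gamma x := by rw [mul_comm α]; ring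
  _ ≤ Real.Gamma (x+α) := h3

noncomputable def mlTerm (α β γ z : ℝ) (m : ℕ) : ℝ :=
  Real.Gamma (γ + m) / Real.Gamma γ * z ^ m / (m.factorial * Real.Gamma (α * m + β))

lemma mlTerm_pos {α β γ z : ℝ} (hα : 0 < α) (hβ : 0 < β) (hγ : 0 < γ) (hz : 0 < z) (m : ℕ) :
    0 < mlTerm α β γ z m := by
  have h1 : (0:ℝ) < γ + m := by positivity
  have h2 : (0:ℝ) < α * m + β := by positivity
  have g1 := Real.Gamma_pos_of_pos h1
  have g2 := Real.Gamma_pos_of_pos h2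
  have g3 := Real.Gamma_pos_of_pos hγ
  have f1 : (0:ℝ) < m.factorial := by exact_mod_cast m.factorial_pos
  unfold mlTerm
  positivity

lemma rem_eq (α β γ z : ℝ) (n : ℕ) :
    genMittagLefflerRem α β γ n z = ∑' k : ℕ, mlTerm α β γ z (n + 1 + k) := by
  unfold genMittagLefflerRem
  refine tsum_congr fun k => ?_
  unfold mlTerm
  push_cast
  ring_nf

lemma mlTerm_prod_id {α β γ z : ℝ} (hα : 0 < α) (hβ : 0 < β) (hγ : 0 < γ) (K : ℕ) :
    mlTerm α β γ z K * mlTerm α β γ z (K+2) =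
      ((γ+K+1)*(K+1))/((γ+K)*(K+2)) * Gq α β K * (mlTerm α β γ z (K+1))^2 := by
  have hK0 : (0:ℝ) < γ + K := by positivity
  have hK1 : (0:ℝ) < γ + K + 1 := by linarith
  have hg1 : Real.Gamma (γ + K + 1) = (γ + K) * Real.Gamma (γ + K) :=
    Real.Gamma_add_one (ne_of_gt hK0)
  have hg2 : Real.Gamma (γ + K + 2) = (γ + K + 1) * ((γ + K) * Real.Gamma (γ + K)) := by
    rw [show γ + (K:ℝ) + 2 = (γ + K + 1) + 1 by ring, Real.Gamma_add_one (ne_of_gt hK1), hg1]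
  have gK : Real.Gamma (γ + K) ≠ 0 := ne_of_gt (Real.Gamma_pos_of_pos hK0)
  have gγ : Real.Gamma γ ≠ 0 := ne_of_gt (Real.Gamma_pos_of_pos hγ)
  have ga0 : Real.Gamma (α*K+β) ≠ 0 := ne_of_gt (Real.Gamma_pos_of_pos (by positivity))
  have ga1 : Real.Gamma (α*((K:ℝ)+1)+β) ≠ 0 := ne_of_gt (Real.Gamma_pos_of_pos (by positivity))
  have ga2 : Real.Gamma (α*((K:ℝ)+2)+β) ≠ 0 := ne_of_gt (Real.Gamma_pos_of_pos (by positivity))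
  have hf : ((K.factorial : ℝ)) ≠ 0 := by exact_mod_cast K.factorial_ne_zero
  have hK0' : γ + (K:ℝ) ≠ 0 := ne_of_gt hK0
  have hK2 : ((K:ℝ)+2) ≠ 0 := by positivity
  have hK1' : ((K:ℝ)+1) ≠ 0 := by positivity
  unfold mlTerm Gq
  push_cast
  rw [show γ + ((K:ℝ) + 1) = γ + K + 1 by ring, show γ + ((K:ℝ) + 2) = γ + K + 2 by ring,
    hg1, hg2, Nat.factorial_succ (K+1), Nat.factorial_succ K]
  push_cast
  field_simp
  ring

lemma mlTerm_summable {α β γ z : ℝ} (hα : 0 < α) (hβ : 0 < β) (hγ : 0 < γ) (hz : 0 < z) :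
    Summable (mlTerm α β γ z) := by
  set M : ℝ := 2 * z * (γ + 1) with hMdef
  have hM : 0 < M := by positivity
  have ht : Tendsto (fun m : ℕ => α * (m:ℝ) + β) atTop atTop :=
    tendsto_atTop_add_const_right _ β
      ((tendsto_const_mul_atTop_of_pos hα).2 tendsto_natCast_atTop_atTop)
  refine summable_of_ratio_norm_eventually_le (r := 1/2) (by norm_num) ?_
  filter_upwards [ht.eventually_ge_atTop (1 + max 1 (M ^ α⁻¹))] with m hm
  set x : ℝ := α * m + β with hxdef
  have hx1 : 1 < x := by
    have : (1:ℝ) ≤ max 1 (M ^ α⁻¹) := le_max_left _ _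
    linarith
  have hxM : M ≤ (x - 1) ^ α := by
    have h1 : M ^ α⁻¹ ≤ x - 1 := by
      have := le_max_right 1 (M ^ α⁻¹); linarith
    calc M = (M ^ α⁻¹) ^ α := by
          rw [← Real.rpow_mul hM.le, inv_mul_cancel₀ (ne_of_gt hα), Real.rpow_one]
    _ ≤ (x - 1) ^ α := Real.rpow_le_rpow (Real.rpow_nonneg hM.le _) h1 hα.le
  -- the ratio bound
  have hx0 : (0:ℝ) < x := by linarith
  have hGx := Real.Gamma_pos_of_pos hx0
  have hGxα := Real.Gamma_pos_of_pos (show (0:ℝ) < x + α by linarith)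
  have hgrow := gamma_ratio_lb hα x hx1
  have hnum : (γ + (m:ℝ)) * z ≤ 1/2 * (((m:ℝ) + 1) * (x-1)^α) := by
    have h1 : (γ + (m:ℝ)) * z ≤ ((γ+1) * ((m:ℝ)+1)) * z := by
      have : γ + (m:ℝ) ≤ (γ+1) * ((m:ℝ)+1) := by nlinarith [Nat.cast_nonneg (α := ℝ) m]
      exact mul_le_mul_of_nonneg_right this hz.le
    have h2 : ((γ+1) * ((m:ℝ)+1)) * z = ((m:ℝ)+1) * (z * (γ+1)) := by ring
    have h3 : z * (γ + 1) = M / 2 := by rw [hMdef]; ring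
    have h4 : ((m:ℝ)+1) * (M/2) ≤ ((m:ℝ)+1) * ((x-1)^α/2) := by
      have : M/2 ≤ (x-1)^α/2 := by linarith
      exact mul_le_mul_of_nonneg_left this (by positivity)
    have h2' : (γ + 1) * ((m:ℝ)+1) * z = ((m:ℝ)+1) * (M/2) := by rw [← h3]; ring
    calc (γ + (m:ℝ)) * z ≤ ((m:ℝ)+1) * (M/2) := by linarith [h1.trans_eq h2']
    _ ≤ ((m:ℝ)+1) * ((x-1)^α/2) := h4
    _ = 1/2 * (((m:ℝ)+1) * (x-1)^α) := by ring
  -- key: T(m+1) * ((m+1) * Γ(x+α)) = T m * ((γ+m) * z * Γ x)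
  have hid : mlTerm α β γ z (m+1) * (((m:ℝ)+1) * Real.Gamma (x + α)) =
      mlTerm α β γ z m * ((γ + (m:ℝ)) * z * Real.Gamma x) := by
    have hγm : (0:ℝ) < γ + m := by positivity
    have hrec : Real.Gamma (γ + ((m:ℝ)+1)) = (γ + m) * Real.Gamma (γ + m) := by
      rw [show γ + ((m:ℝ)+1) = (γ + m) + 1 by ring]
      exact Real.Gamma_add_one (ne_of_gt hγm)
    have harg : α * ((m:ℝ)+1) + β = x + α := by rw [hxdef]; ring
    have hγ0 : Real.Gamma γ ≠ 0 := ne_of_gt (Real.Gamma_pos_of_pos hγ)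
    have hf : ((m.factorial : ℝ)) ≠ 0 := by exact_mod_cast m.factorial_ne_zero
    unfold mlTerm
    push_cast
    rw [hrec, harg, Nat.factorial_succ]
    push_cast
    field_simp
    rw [hxdef]; ring_nf
  have hTm := mlTerm_pos hα hβ hγ hz m
  have hTm1 := mlTerm_pos hα hβ hγ hz (m+1)
  rw [Real.norm_of_nonneg hTm1.le, Real.norm_of_nonneg hTm.le]
  have hden : (0:ℝ) < ((m:ℝ)+1) * Real.Gamma (x + α) := by positivity
  rw [← mul_le_mul_iff_of_pos_right hden, hid]
  calc mlTerm α β γ z m * ((γ + (m:ℝ)) * z * Real.Gamma x)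
      ≤ mlTerm α β γ z m * ((1/2 * (((m:ℝ)+1) * (x-1)^α)) * Real.Gamma x) := by
        refine mul_le_mul_of_nonneg_left ?_ hTm.le
        exact mul_le_mul_of_nonneg_right hnum hGx.le
  _ = (1/2 * mlTerm α β γ z m) * (((m:ℝ)+1) * (Real.Gamma x * (x-1)^α)) := by ring
  _ ≤ (1/2 * mlTerm α β γ z m) * (((m:ℝ)+1) * Real.Gamma (x+α)) := by
        refine mul_le_mul_of_nonneg_left ?_ (by positivity)
        exact mul_le_mul_of_nonneg_left hgrow (by positivity)
  _ = 1/2 * mlTerm α β γ z m * (((m:ℝ)+1) * Real.Gamma (x+α)) := by ring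

lemma coeff_ineq {α β γ z : ℝ} (hα : 0 < α) (hβ : 0 < β) (hγ : 0 < γ) (hz : 0 < z)
    (n j : ℕ) :
    ((n + 1) * (γ + n + 2)) / ((n + 2) * (γ + n + 1)) *
        ((Real.Gamma (β + α * (n + 2))) ^ 2 /
          (Real.Gamma (β + α * (n + 1)) * Real.Gamma (β + α * (n + 3)))) *
        (mlTerm α β γ z (n+2+j))^2 ≤ mlTerm α β γ z (n+1+j) * mlTerm α β γ z (n+3+j) := by
  have e3 : n+3+j = (n+1+j)+2 := by omega
  have e2 : n+2+j = (n+1+j)+1 := by omega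
  rw [e3, e2]
  set K := n+1+j with hK
  rw [mlTerm_prod_id hα hβ hγ K]
  have hGeq : (Real.Gamma (β + α * (n + 2))) ^ 2 /
      (Real.Gamma (β + α * (n + 1)) * Real.Gamma (β + α * (n + 3))) = Gq α β (n+1) := by
    unfold Gq
    push_cast
    ring_nf
  rw [hGeq]
  refine mul_le_mul_of_nonneg_right ?_ (sq_nonneg _)
  have hKc : (K:ℝ) = (n:ℝ) + 1 + (j:ℝ) := by rw [hK]; push_cast; ring
  have hGqK : 0 ≤ Gq α β K := (Gq_pos hα hβ K).le
  have hP : ((n:ℝ) + 1) * (γ + n + 2) / (((n:ℝ) + 2) * (γ + n + 1)) ≤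
      ((γ+(K:ℝ)+1)*((K:ℝ)+1))/((γ+(K:ℝ))*((K:ℝ)+2)) := by
    rw [div_le_div_iff₀ (by positivity) (by positivity)]
    rw [hKc]
    nlinarith [Nat.cast_nonneg (α := ℝ) n, Nat.cast_nonneg (α := ℝ) j,
      mul_nonneg (Nat.cast_nonneg (α := ℝ) n) (Nat.cast_nonneg (α := ℝ) j),
      mul_nonneg (mul_nonneg (Nat.cast_nonneg (α := ℝ) n) (Nat.cast_nonneg (α := ℝ) j)) hγ.le,
      mul_nonneg (Nat.cast_nonneg (α := ℝ) j) hγ.le,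
      mul_nonneg (mul_nonneg (Nat.cast_nonneg (α := ℝ) j) hγ.le) hγ.le,
      mul_nonneg (Nat.cast_nonneg (α := ℝ) n) hγ.le, sq_nonneg ((j:ℝ)), sq_nonneg ((n:ℝ)),
      mul_nonneg (mul_nonneg (Nat.cast_nonneg (α := ℝ) j) (Nat.cast_nonneg (α := ℝ) j)) hγ.le]
  have hPnn : (0:ℝ) ≤ ((n:ℝ) + 1) * (γ + n + 2) / (((n:ℝ) + 2) * (γ + n + 1)) := by positivity
  have hGmono : Gq α β (n+1) ≤ Gq α β K := Gq_mono hα hβ (by omega : n+1 ≤ K)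
  have hfKnn : (0:ℝ) ≤ ((γ+(K:ℝ)+1)*((K:ℝ)+1))/((γ+(K:ℝ))*((K:ℝ)+2)) := by positivity
  exact mul_le_mul hP hGmono (Gq_pos hα hβ (n+1)).le hfKnn

/-- Sharp Turán type inequality for remainders of the generalized
Mittag-Leffler series. -/
theorem genMittagLefflerRem_turan_sharp (α β γ : ℝ) (hα : 0 < α) (hβ : 0 < β)
    (hγ : 0 < γ) (n : ℕ) :
    ∀ z : ℝ, 0 < z →
      ((n + 1) * (γ + n + 2)) / ((n + 2) * (γ + n + 1)) *
          ((Real.Gamma (β + α * (n + 2))) ^ 2 /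
            (Real.Gamma (β + α * (n + 1)) * Real.Gamma (β + α * (n + 3)))) *
          (genMittagLefflerRem α β γ (n + 1) z) ^ 2 ≤
        genMittagLefflerRem α β γ n z * genMittagLefflerRem α β γ (n + 2) z := by
  intro z hz
  set T : ℕ → ℝ := mlTerm α β γ z with hT
  have hTpos : ∀ m, 0 < T m := mlTerm_pos hα hβ hγ hz
  have hS : Summable T := mlTerm_summable hα hβ hγ hz
  have hshift : ∀ c : ℕ, Summable (fun k : ℕ => T (c + k)) := by
    intro c
    exact ((summable_nat_add_iff c).2 hS).congr fun k => by rw [add_comm]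
  set Cst : ℝ := ((n + 1) * (γ + n + 2)) / ((n + 2) * (γ + n + 1)) *
      ((Real.Gamma (β + α * (n + 2))) ^ 2 /
        (Real.Gamma (β + α * (n + 1)) * Real.Gamma (β + α * (n + 3)))) with hCst
  have hCpos : 0 < Cst := by
    have g1 := Real.Gamma_pos_of_pos (show (0:ℝ) < β + α * (n+1) by positivity)
    have g2 := Real.Gamma_pos_of_pos (show (0:ℝ) < β + α * (n+2) by positivity)
    have g3 := Real.Gamma_pos_of_pos (show (0:ℝ) < β + α * (n+3) by positivity)
    rw [hCst]; positivity
  have hrem0 : genMittagLefflerRem α β γ n z = ∑' k, T (n+1+k) := rem_eq α β γ z n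
  have hrem1 : genMittagLefflerRem α β γ (n+1) z = ∑' k, T (n+2+k) := by
    rw [rem_eq α β γ z (n+1)]
  have hrem2 : genMittagLefflerRem α β γ (n+2) z = ∑' k, T (n+3+k) := by
    rw [rem_eq α β γ z (n+2)]
  have hS1 : Summable (fun k : ℕ => T (n+1+k)) := hshift (n+1)
  have hS3 : Summable (fun k : ℕ => T (n+3+k)) := hshift (n+3)
  have hR1nn : 0 ≤ ∑' k, T (n+1+k) := tsum_nonneg fun k => (hTpos _).le
  have hR2nn : 0 ≤ ∑' k, T (n+2+k) := tsum_nonneg fun k => (hTpos _).le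
  have hR3nn : 0 ≤ ∑' k, T (n+3+k) := tsum_nonneg fun k => (hTpos _).le
  have key : Real.sqrt Cst * ∑' k, T (n+2+k) ≤
      Real.sqrt (∑' k, T (n+1+k)) * Real.sqrt (∑' k, T (n+3+k)) := by
    rw [← tsum_mul_left]
    refine tsum_le_of_sum_le' (by positivity) fun s => ?_
    calc ∑ k ∈ s, Real.sqrt Cst * T (n+2+k)
        ≤ ∑ k ∈ s, Real.sqrt (T (n+1+k)) * Real.sqrt (T (n+3+k)) := by
          refine Finset.sum_le_sum fun k _ => ?_
          have h1 : Real.sqrt Cst * T (n+2+k) = Real.sqrt (Cst * (T (n+2+k))^2) := by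
            rw [Real.sqrt_mul hCpos.le, Real.sqrt_sq (hTpos _).le]
          rw [h1, ← Real.sqrt_mul (hTpos (n+1+k)).le]
          exact Real.sqrt_le_sqrt (coeff_ineq hα hβ hγ hz n k)
    _ ≤ Real.sqrt (∑ k ∈ s, T (n+1+k)) * Real.sqrt (∑ k ∈ s, T (n+3+k)) :=
          Real.sum_sqrt_mul_sqrt_le s (fun k => (hTpos _).le) (fun k => (hTpos _).le)
    _ ≤ Real.sqrt (∑' k, T (n+1+k)) * Real.sqrt (∑' k, T (n+3+k)) := by
          refine mul_le_mul ?_ ?_ (Real.sqrt_nonneg _) (Real.sqrt_nonneg _)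
          · exact Real.sqrt_le_sqrt (Summable.sum_le_tsum s (fun k _ => (hTpos _).le) hS1)
          · exact Real.sqrt_le_sqrt (Summable.sum_le_tsum s (fun k _ => (hTpos _).le) hS3)
  have h2 := pow_le_pow_left₀ (by positivity) key 2
  rw [mul_pow, mul_pow, Real.sq_sqrt hCpos.le, Real.sq_sqrt hR1nn, Real.sq_sqrt hR3nn] at h2
  rw [hrem0, hrem1, hrem2]
  exact h2
end
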